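/- arXiv:2011.04478 — 6 statements merged into one kernel-verified Lean document; each statement's English description precedes it below -/
import Mathlib

section
/- Fix k ∈ ℕ, real numbers α₁ > α₂ > ⋯ > α_p, and positive integers m₁,…,m_p with m₁ + ⋯ + m_p = k. For any vector z = (z₁,…,z_k) ∈ ℝ^k with all entries distinct, the k×k determinant whose rows are grouped into blocks, the ℓ-th block consisting of the rows ( z_j^{i−1} e^{α_ℓ z_j} )_{j=1,…,k} for i = 1,…,m_ℓ, is nonzero. -/
open Finset Polynomial

lemma rolle_finset (f : ℝ → ℝ) (hf : Differentiable ℝ f) :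
    ∀ (n : ℕ) (s : Finset ℝ), s.card = n → (∀ x ∈ s, f x = 0) →
    ∃ t : Finset ℝ, s.card ≤ t.card + 1 ∧ (∀ x ∈ t, deriv f x = 0) ∧
      ∀ x ∈ t, ∃ a ∈ s, x < a := by
  intro n
  induction n with
  | zero => intro s hs _; exact ⟨∅, by simp [hs], by simp, by simp⟩
  | succ n ih =>
    intro s hcard hs
    rcases Nat.eq_zero_or_pos n with hn | hn
    · exact ⟨∅, by omega, by simp, by simp⟩
    have hne : s.Nonempty := Finset.card_pos.1 (by omega)
    set b := s.max' hne with hb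
    have hbs : b ∈ s := s.max'_mem hne
    set s' := s.erase b with hs'
    have hcard' : s'.card = n := by rw [hs', Finset.card_erase_of_mem hbs, hcard]; omega
    have hne' : s'.Nonempty := Finset.card_pos.1 (by omega)
    set a := s'.max' hne' with ha
    have has' : a ∈ s' := s'.max'_mem hne'
    have has : a ∈ s := Finset.mem_of_mem_erase has'
    have hab : a < b := lt_of_le_of_ne (s.le_max' a has) (Finset.ne_of_mem_erase has')
    obtain ⟨c, hc, hc0⟩ := exists_deriv_eq_zero hab (hf.continuous.continuousOn)
      (by rw [hs a has, hs b hbs])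
    obtain ⟨t', ht'card, ht'zero, ht'lt⟩ := ih s' hcard' (fun x hx => hs x (Finset.mem_of_mem_erase hx))
    have hct' : c ∉ t' := by
      intro hcin
      obtain ⟨a', ha', hlt⟩ := ht'lt c hcin
      have : a' ≤ a := s'.le_max' a' ha'
      have : c < a := lt_of_lt_of_le hlt this
      exact absurd hc.1 (not_lt.2 this.le)
    refine ⟨insert c t', ?_, ?_, ?_⟩
    · rw [Finset.card_insert_of_notMem hct']; omega
    · intro x hx
      rcases Finset.mem_insert.1 hx with rfl | hx
      · exact hc0
      · exact ht'zero x hx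
    · intro x hx
      rcases Finset.mem_insert.1 hx with rfl | hx
      · exact ⟨b, hbs, hc.2⟩
      · obtain ⟨a', ha', hlt⟩ := ht'lt x hx
        exact ⟨a', Finset.mem_of_mem_erase ha', hlt⟩

lemma expsum_hasDerivAt (A : Finset ℝ) (P : ℝ → ℝ[X]) (x : ℝ) :
    HasDerivAt (fun y => ∑ a ∈ A, (P a).eval y * Real.exp (a * y))
      (∑ a ∈ A, ((derivative (P a)).eval x * Real.exp (a * x)
        + (P a).eval x * (a * Real.exp (a * x)))) x := by
  apply HasDerivAt.fun_sum
  intro a _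
  have h1 : HasDerivAt (fun y => (P a).eval y) ((derivative (P a)).eval x) x :=
    (P a).hasDerivAt x
  have h2 : HasDerivAt (fun y => Real.exp (a * y)) (a * Real.exp (a * x)) x := by
    have := (Real.hasDerivAt_exp (a * x)).comp x ((hasDerivAt_id x).const_mul a)
    exact this.congr_deriv (by simp only [id_eq, mul_one]; ring)
  exact h1.mul h2

lemma expsum_card_zeros : ∀ (k : ℕ) (A : Finset ℝ) (P : ℝ → ℝ[X]),
    A.Nonempty → (∀ a ∈ A, P a ≠ 0) →
    (∑ a ∈ A, ((P a).natDegree + 1)) ≤ k →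
    ∀ s : Finset ℝ, (∀ x ∈ s, ∑ a ∈ A, (P a).eval x * Real.exp (a * x) = 0) →
    s.card < k := by
  intro k
  induction k with
  | zero =>
    intro A P hA hP hw s hs
    have : 0 < ∑ a ∈ A, ((P a).natDegree + 1) :=
      Finset.sum_pos (fun a _ => Nat.succ_pos _) hA
    omega
  | succ k ih =>
    intro A P hA hP hw s hs
    set a0 := A.max' hA with ha0
    have ha0A : a0 ∈ A := A.max'_mem hA
    set Q : ℝ → ℝ[X] := fun a => derivative (P a) + C (a - a0) * P a with hQ
    -- nonvanishing of Q off a0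
    have hQne : ∀ a ∈ A, a ≠ a0 → Q a ≠ 0 := by
      intro a haA hne h0
      have hc : (Q a).coeff ((P a).natDegree) = (a - a0) * (P a).coeff (P a).natDegree := by
        rw [hQ]
        simp only [Polynomial.coeff_add, Polynomial.coeff_derivative,
          Polynomial.coeff_C_mul, Polynomial.coeff_natDegree_succ_eq_zero]
        ring
      rw [h0, Polynomial.coeff_zero] at hc
      rcases mul_eq_zero.1 hc.symm with h | h
      · exact hne (sub_eq_zero.1 h)
      · exact hP a haA (Polynomial.leadingCoeff_eq_zero.1 h)
    have hdegQ : ∀ a, (Q a).natDegree ≤ (P a).natDegree := by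
      intro a
      apply le_trans (Polynomial.natDegree_add_le _ _)
      exact max_le (le_trans (P a).natDegree_derivative_le (Nat.sub_le _ _))
        (Polynomial.natDegree_C_mul_le _ _)
    by_cases hA' : (A.filter fun a => Q a ≠ 0).Nonempty
    case neg =>
      -- all Q a = 0, so A = {a0} and P a0 is a nonzero constant; no zeros at all
      have hQ0 : ∀ a ∈ A, Q a = 0 := by
        intro a haA
        by_contra h
        exact hA' ⟨a, Finset.mem_filter.2 ⟨haA, h⟩⟩
      have hAsub : A = {a0} := by
        apply Finset.eq_singleton_iff_unique_mem.2
        refine ⟨ha0A, fun a haA => ?_⟩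
        by_contra hne
        exact hQne a haA hne (hQ0 a haA)
      have hder : derivative (P a0) = 0 := by
        have := hQ0 a0 ha0A
        rw [hQ] at this
        simpa using this
      have hdeg0 : (P a0).natDegree = 0 :=
        Polynomial.natDegree_eq_zero_of_derivative_eq_zero hder
      obtain ⟨c, hc⟩ := Polynomial.natDegree_eq_zero.1 hdeg0
      have hc0 : c ≠ 0 := by
        intro h; exact hP a0 ha0A (by rw [← hc, h, map_zero])
      have hsempty : s = ∅ := by
        by_contra h
        obtain ⟨x, hx⟩ := Finset.nonempty_iff_ne_empty.2 h
        have := hs x hx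
        rw [hAsub] at this
        exact hc0 (by simpa [← hc, Real.exp_ne_zero] using this)
      rw [hsempty]; simp
    case pos =>
      -- the derivative trick
      set h : ℝ → ℝ := fun y => Real.exp (-a0 * y) * ∑ a ∈ A, (P a).eval y * Real.exp (a * y)
        with hh
      have hder : ∀ x, HasDerivAt h
          (Real.exp (-a0 * x) * ∑ a ∈ A, (Q a).eval x * Real.exp (a * x)) x := by
        intro x
        have h1 : HasDerivAt (fun y => Real.exp (-a0 * y)) (-a0 * Real.exp (-a0 * x)) x := by
          have := ((hasDerivAt_id x).const_mul (-a0)).exp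
          convert this using 1
          simp [mul_comm]
          simp only [id_eq, mul_one]
          ring
        have h2 := expsum_hasDerivAt A P x
        have : HasDerivAt h _ x := h1.mul h2
        convert this using 1
        simp only [Finset.mul_sum, ← Finset.sum_add_distrib]
        apply Finset.sum_congr rfl
        intro a _
        rw [hQ]
        simp only [Polynomial.eval_add, Polynomial.eval_mul, Polynomial.eval_C]
        ring
      have hdiff : Differentiable ℝ h := fun x => (hder x).differentiableAt
      obtain ⟨t, htcard, htzero, _⟩ := rolle_finset h hdiff s.card s rfl
        (fun x hx => by rw [hh]; simp [hs x hx])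
      have htQ : ∀ x ∈ t, ∑ a ∈ A.filter (fun a => Q a ≠ 0), (Q a).eval x * Real.exp (a * x) = 0 := by
        intro x hx
        have h1 : deriv h x = Real.exp (-a0 * x) * ∑ a ∈ A, (Q a).eval x * Real.exp (a * x) :=
          (hder x).deriv
        have h2 := htzero x hx
        rw [h1] at h2
        have h3 : ∑ a ∈ A, (Q a).eval x * Real.exp (a * x) = 0 :=
          (mul_eq_zero.1 h2).resolve_left (Real.exp_ne_zero _)
        rw [← h3]
        apply Finset.sum_filter_of_ne
        intro a _ hne h0
        exact hne (by rw [h0]; simp)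
      -- weight bound
      set c : ℝ → ℕ := fun a => if a = a0 then (P a0).natDegree else (P a).natDegree + 1
        with hc
      have hw1 : ∑ a ∈ A.filter (fun a => Q a ≠ 0), ((Q a).natDegree + 1) ≤
          ∑ a ∈ A.filter (fun a => Q a ≠ 0), c a := by
        apply Finset.sum_le_sum
        intro a ha
        obtain ⟨haA, haQ⟩ := Finset.mem_filter.1 ha
        simp only [hc]
        by_cases haa : a = a0
        · rw [if_pos haa, ← haa]
          have hQa : Q a = derivative (P a) := by rw [hQ]; simp [haa]
          rw [hQa]
          rw [hQa] at haQ
          have hnd : (P a).natDegree ≠ 0 := by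
            intro h0
            obtain ⟨cc, hcc⟩ := Polynomial.natDegree_eq_zero.1 h0
            rw [← hcc] at haQ
            simp at haQ
          have := Polynomial.natDegree_derivative_lt (p := P a) hnd
          omega
        · simp only [if_neg haa]
          exact Nat.succ_le_succ (hdegQ a)
      have hw2 : ∑ a ∈ A.filter (fun a => Q a ≠ 0), c a ≤ ∑ a ∈ A, c a :=
        Finset.sum_le_sum_of_subset (Finset.filter_subset _ _)
      have hw3 : ∑ a ∈ A, c a + 1 = ∑ a ∈ A, ((P a).natDegree + 1) := by
        rw [← Finset.add_sum_erase A c ha0A, ← Finset.add_sum_erase A _ ha0A]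
        have : ∑ x ∈ A.erase a0, c x = ∑ x ∈ A.erase a0, ((P x).natDegree + 1) := by
          apply Finset.sum_congr rfl
          intro x hx
          rw [hc]; simp [Finset.ne_of_mem_erase hx]
        rw [this]
        simp [hc]
        omega
      have hwQ : ∑ a ∈ A.filter (fun a => Q a ≠ 0), ((Q a).natDegree + 1) ≤ k := by omega
      have := ih (A.filter fun a => Q a ≠ 0) Q hA'
        (fun a ha => (Finset.mem_filter.1 ha).2) hwQ t htQ
      omega



/-- the block determinant with rows `z_j^{i-1} e^{α_ℓ z_j}` (block `ℓ` of
size `m_ℓ`, `i = 1,…,m_ℓ`) is nonzero whenever the points `z` are distinct and the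
exponents `α₁ > ⋯ > α_p` are distinct. Rows and columns are indexed by the pairs
`(ℓ, i)` with `ℓ : Fin p`, `i : Fin (m ℓ)` (a set of cardinality `k = Σ m_ℓ`). -/
theorem stmt6 (p : ℕ) (m : Fin p → ℕ) (hm : ∀ ℓ, 0 < m ℓ)
    (α : Fin p → ℝ) (hα : StrictAnti α)
    (z : (Σ ℓ : Fin p, Fin (m ℓ)) → ℝ) (hz : Function.Injective z) :
    Matrix.det (Matrix.of fun r c : (Σ ℓ : Fin p, Fin (m ℓ)) =>
      z c ^ (r.2 : ℕ) * Real.exp (α r.1 * z c)) ≠ 0 := by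
  intro hdet
  set M : Matrix (Σ ℓ : Fin p, Fin (m ℓ)) (Σ ℓ : Fin p, Fin (m ℓ)) ℝ :=
    Matrix.of fun r c => z c ^ (r.2 : ℕ) * Real.exp (α r.1 * z c) with hM
  obtain ⟨v, hv0, hv⟩ := Matrix.exists_mulVec_eq_zero_iff.2
    (show M.transpose.det = 0 by rw [Matrix.det_transpose]; exact hdet)
  have hvanish : ∀ c : (Σ ℓ : Fin p, Fin (m ℓ)),
      ∑ r : (Σ ℓ : Fin p, Fin (m ℓ)), v r * (z c ^ (r.2 : ℕ) * Real.exp (α r.1 * z c)) = 0 := by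
    intro c
    have := congrFun hv c
    simp only [Matrix.mulVec, dotProduct, Matrix.transpose_apply, hM,
      Matrix.of_apply, Pi.zero_apply] at this
    rw [← this]
    apply Finset.sum_congr rfl
    intro r _
    ring
  set P : Fin p → Polynomial ℝ :=
    fun ℓ => ∑ i : Fin (m ℓ), Polynomial.C (v ⟨ℓ, i⟩) * Polynomial.X ^ (i : ℕ) with hP
  have hPcoeff : ∀ (ℓ : Fin p) (i : Fin (m ℓ)), (P ℓ).coeff (i : ℕ) = v ⟨ℓ, i⟩ := by
    intro ℓ i
    rw [hP]
    simp only [Polynomial.finset_sum_coeff, Polynomial.coeff_C_mul, Polynomial.coeff_X_pow]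
    rw [Finset.sum_eq_single i]
    · simp
    · intro j _ hj
      have : (i : ℕ) ≠ (j : ℕ) := fun h => hj (Fin.ext h.symm)
      simp [this]
    · simp
  have hPeval : ∀ (ℓ : Fin p) (x : ℝ), (P ℓ).eval x = ∑ i : Fin (m ℓ), v ⟨ℓ, i⟩ * x ^ (i : ℕ) := by
    intro ℓ x
    rw [hP]
    simp [Polynomial.eval_finset_sum]
  have hg : ∀ c : (Σ ℓ : Fin p, Fin (m ℓ)),
      ∑ ℓ : Fin p, (P ℓ).eval (z c) * Real.exp (α ℓ * z c) = 0 := by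
    intro c
    rw [← hvanish c, ← Finset.univ_sigma_univ, Finset.sum_sigma]
    apply Finset.sum_congr rfl
    intro ℓ _
    rw [hPeval, Finset.sum_mul]
    apply Finset.sum_congr rfl
    intro i _
    ring
  have hex : ∃ ℓ, P ℓ ≠ 0 := by
    obtain ⟨r, hr⟩ := Function.ne_iff.1 hv0
    refine ⟨r.1, fun h0 => hr ?_⟩
    have hcf := hPcoeff r.1 r.2
    rw [h0] at hcf
    simpa using hcf.symm
  have hdegP : ∀ ℓ, (P ℓ).natDegree + 1 ≤ m ℓ := by
    intro ℓ
    have h1 : (P ℓ).natDegree ≤ m ℓ - 1 := by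
      rw [hP]
      apply Polynomial.natDegree_sum_le_of_forall_le
      intro i _
      apply le_trans (Polynomial.natDegree_C_mul_le _ _)
      rw [Polynomial.natDegree_X_pow]
      have hi := i.isLt
      omega
    have h2 := hm ℓ
    omega
  classical
  set L : Finset (Fin p) := Finset.univ.filter (fun ℓ => P ℓ ≠ 0) with hL
  set A : Finset ℝ := L.image α with hA
  set Pol : ℝ → Polynomial ℝ :=
    fun a => ∑ ℓ ∈ Finset.univ.filter (fun ℓ => α ℓ = a), P ℓ with hPol
  have hPolα : ∀ ℓ : Fin p, Pol (α ℓ) = P ℓ := by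
    intro ℓ
    rw [hPol]
    have hfil : Finset.univ.filter (fun ℓ' => α ℓ' = α ℓ) = {ℓ} := by
      ext ℓ'
      simp [hα.injective.eq_iff]
    simp only [hfil, Finset.sum_singleton]
  have hAne : A.Nonempty := by
    obtain ⟨ℓ, hℓ⟩ := hex
    exact ⟨α ℓ, Finset.mem_image.2 ⟨ℓ, Finset.mem_filter.2 ⟨Finset.mem_univ _, hℓ⟩, rfl⟩⟩
  have hPolne : ∀ a ∈ A, Pol a ≠ 0 := by
    intro a ha
    obtain ⟨ℓ, hℓ, rfl⟩ := Finset.mem_image.1 ha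
    rw [hPolα]
    exact (Finset.mem_filter.1 hℓ).2
  have hsumA : ∀ x : ℝ, ∑ a ∈ A, (Pol a).eval x * Real.exp (a * x)
      = ∑ ℓ : Fin p, (P ℓ).eval x * Real.exp (α ℓ * x) := by
    intro x
    rw [hA, Finset.sum_image (fun x _ y _ h => hα.injective h)]
    have h1 : ∑ ℓ ∈ L, (P ℓ).eval x * Real.exp (α ℓ * x)
        = ∑ ℓ : Fin p, (P ℓ).eval x * Real.exp (α ℓ * x) := by
      rw [hL]
      apply Finset.sum_filter_of_ne
      intro ℓ _ hne h0
      exact hne (by rw [h0]; simp)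
    rw [← h1]
    apply Finset.sum_congr rfl
    intro ℓ _
    rw [hPolα]
  have hweight : ∑ a ∈ A, ((Pol a).natDegree + 1) ≤ ∑ ℓ : Fin p, m ℓ := by
    rw [hA, Finset.sum_image (fun x _ y _ h => hα.injective h)]
    calc ∑ ℓ ∈ L, ((Pol (α ℓ)).natDegree + 1) = ∑ ℓ ∈ L, ((P ℓ).natDegree + 1) := by
          apply Finset.sum_congr rfl; intro ℓ _; rw [hPolα]
      _ ≤ ∑ ℓ ∈ L, m ℓ := Finset.sum_le_sum (fun ℓ _ => hdegP ℓ)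
      _ ≤ ∑ ℓ : Fin p, m ℓ := Finset.sum_le_sum_of_subset (Finset.filter_subset _ _)
  set s : Finset ℝ := Finset.univ.image z with hs'
  have hscard : s.card = ∑ ℓ : Fin p, m ℓ := by
    rw [hs', Finset.card_image_of_injective _ hz, Finset.card_univ]
    simp [Fintype.card_sigma]
  have hzero : ∀ x ∈ s, ∑ a ∈ A, (Pol a).eval x * Real.exp (a * x) = 0 := by
    intro x hx
    obtain ⟨c, _, rfl⟩ := Finset.mem_image.1 hx
    rw [hsumA]
    exact hg c
  have := expsum_card_zeros (∑ ℓ : Fin p, m ℓ) A Pol hAne hPolne hweight s hzero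
  omega
end

section
/- Fix p ∈ (0,1) and R > 0. Suppose x ∈ [−R, R] and N = pn + √n·x ∈ [0,n] is an integer. Then the binomial coefficient satisfies C(n,N) = (2π)^{−1/2} exp( −x²/(2p(1−p)) ) · exp( N log((1−p)/p) − n log(1−p) − (1/2) log n − (1/2) log(p(1−p)) ) · exp( O(n^{−1/2}) ), where the implied constant in O(n^{−1/2}) depends only on p and R. -/
set_option maxHeartbeats 1000000

open Stirling Real Filter

lemma tele (m : ℕ) : ∀ j : ℕ, Real.log (stirlingSeq (m+2)) - Real.log (stirlingSeq (m+2+j)) ≤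
    1/4 * (1/((m:ℝ)+1) - 1/((m:ℝ)+1+j)) := by
  intro j
  induction j with
  | zero => simp
  | succ j ih =>
    have h2 := Stirling.log_stirlingSeq_sub_log_stirlingSeq_succ (m+j+1+1)
    have e1 : m + 2 + j = m + j + 1 + 1 := by omega
    have e2 : m + 2 + (j+1) = m + j + 1 + 1 + 1 := by omega
    rw [e2]
    rw [e1] at ih
    push_cast at h2 ⊢
    have hm : (0:ℝ) ≤ (m:ℝ) := Nat.cast_nonneg m
    have hj : (0:ℝ) ≤ (j:ℝ) := Nat.cast_nonneg j
    have h3 : (0:ℝ) < (m:ℝ)+1+j := by positivity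
    have h4 : (0:ℝ) < (m:ℝ)+1+((j:ℝ)+1) := by positivity
    have e : 1/((m:ℝ)+1+(j:ℝ)) - 1/((m:ℝ)+1+((j:ℝ)+1)) =
        1/(((m:ℝ)+1+(j:ℝ))*((m:ℝ)+1+((j:ℝ)+1))) := by
      field_simp
      ring
    have key : (1:ℝ)/(4*((m:ℝ)+(j:ℝ)+1+1)^2) ≤
        1/4 * (1/((m:ℝ)+1+(j:ℝ)) - 1/((m:ℝ)+1+((j:ℝ)+1))) := by
      rw [e]
      calc (1:ℝ)/(4*((m:ℝ)+(j:ℝ)+1+1)^2)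
          ≤ 1/(4*(((m:ℝ)+1+(j:ℝ))*((m:ℝ)+1+((j:ℝ)+1)))) := by
            apply one_div_le_one_div_of_le (by positivity)
            nlinarith
        _ = 1/4 * (1/(((m:ℝ)+1+(j:ℝ))*((m:ℝ)+1+((j:ℝ)+1)))) := by
            rw [mul_comm]
            rw [one_div, one_div, one_div, mul_inv]
            ring
    linarith [ih, h2, key]

lemma stirling_r_bound (m : ℕ) (hm : 2 ≤ m) :
    0 ≤ Real.log (stirlingSeq m) - Real.log (Real.sqrt Real.pi) ∧
    Real.log (stirlingSeq m) - Real.log (Real.sqrt Real.pi) ≤ 1/(m:ℝ) := by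
  have hπ : (0:ℝ) < Real.sqrt Real.pi := Real.sqrt_pos.mpr Real.pi_pos
  have htend : Tendsto (fun k => Real.log (stirlingSeq k)) atTop (nhds (Real.log (Real.sqrt Real.pi))) :=
    Stirling.tendsto_stirlingSeq_sqrt_pi.log hπ.ne'
  obtain ⟨k, rfl⟩ : ∃ k, m = k + 2 := ⟨m - 2, by omega⟩
  constructor
  · rw [sub_nonneg]
    have h1 : Tendsto (fun j : ℕ => Real.log (stirlingSeq (j+1))) atTop
        (nhds (Real.log (Real.sqrt Real.pi))) := by
      have := htend.comp (tendsto_add_atTop_nat 1)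
      exact this
    refine le_of_tendsto h1 ?_
    rw [eventually_atTop]
    refine ⟨k+1, fun j hj => ?_⟩
    have := Stirling.log_stirlingSeq'_antitone (show k+1 ≤ j from hj)
    simpa [Function.comp, Nat.succ_eq_add_one] using this
  · have haux : Tendsto (fun j : ℕ => Real.log (stirlingSeq (k+2+j))) atTop
        (nhds (Real.log (Real.sqrt Real.pi))) := by
      have h0 := htend.comp (tendsto_add_atTop_nat (k+2))
      refine Tendsto.congr (fun j => ?_) h0
      simp [Function.comp, Nat.add_comm]
    have h1 : Tendsto (fun j : ℕ => Real.log (stirlingSeq (k+2)) - Real.log (stirlingSeq (k+2+j)))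
        atTop (nhds (Real.log (stirlingSeq (k+2)) - Real.log (Real.sqrt Real.pi))) :=
      tendsto_const_nhds.sub haux
    have h2 : Real.log (stirlingSeq (k+2)) - Real.log (Real.sqrt Real.pi) ≤ 1/4 * (1/((k:ℝ)+1)) := by
      refine le_of_tendsto h1 ?_
      filter_upwards with j
      refine (tele k j).trans ?_
      have hp1 : (0:ℝ) < (k:ℝ)+1+j := by positivity
      have hp2 : (0:ℝ) ≤ 1/((k:ℝ)+1+j) := by positivity
      linarith
    have hk : (0:ℝ) ≤ (k:ℝ) := Nat.cast_nonneg k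
    have h3 : 1/4 * (1/((k:ℝ)+1)) ≤ 1/((k:ℝ)+2) := by
      rw [show (1:ℝ)/4 * (1/((k:ℝ)+1)) = 1/(4*((k:ℝ)+1)) by
        rw [one_div, one_div, one_div, mul_inv]]
      apply one_div_le_one_div_of_le (by positivity)
      linarith
    push_cast
    linarith [h2, h3]

lemma stirling_log_factorial (m : ℕ) (hm : 1 ≤ m) :
    Real.log (m.factorial) = ((m:ℝ) + 1/2) * Real.log m - m + (1/2) * Real.log (2*Real.pi)
      + (Real.log (stirlingSeq m) - Real.log (Real.sqrt Real.pi)) := by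
  have hm0 : (0:ℝ) < m := by exact_mod_cast hm
  have h := Stirling.log_stirlingSeq_formula m
  rw [Real.log_mul two_ne_zero hm0.ne', Real.log_div hm0.ne' (Real.exp_pos 1).ne',
    Real.log_exp] at h
  have hπ : Real.log (Real.sqrt Real.pi) = Real.log Real.pi / 2 := Real.log_sqrt Real.pi_pos.le
  rw [Real.log_mul two_ne_zero Real.pi_pos.ne', hπ]
  linarith [h]

lemma taylor_log (u : ℝ) (hu : |u| ≤ 1/4) : |Real.log (1+u) - (u - u^2/2)| ≤ 2*|u|^3 := by
  have hu0 : (0:ℝ) ≤ |u| := abs_nonneg u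
  have h1 : |(-u)| < 1 := by rw [abs_neg]; linarith
  have h := Real.abs_log_sub_add_sum_range_le h1 2
  have hs : ∑ i ∈ Finset.range 2, (-u)^(i+1)/((i:ℝ)+1) = -u + u^2/2 := by
    simp [Finset.sum_range_succ]
    ring
  rw [hs, abs_neg, sub_neg_eq_add] at h
  rw [show Real.log (1+u) - (u - u^2/2) = (-u + u^2/2) + Real.log (1+u) from by ring]
  refine h.trans ?_
  rw [div_le_iff₀ (by linarith)]
  have h3 : |u|^(2+1) = |u|^3 := by norm_num
  rw [h3]
  nlinarith [mul_le_mul_of_nonneg_left hu (pow_nonneg hu0 3), pow_nonneg hu0 3]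

/-- local central limit theorem type asymptotics for binomial coefficients:
for `N = pn + √n·x` an integer in `[0,n]` with `|x| ≤ R`,
`C(n,N) = (2π)^{−1/2} e^{−x²/(2p(1−p))} · exp(N log((1−p)/p) − n log(1−p) − ½ log n − ½ log(p(1−p))) · e^{O(n^{−1/2})}`,
where the implied constant depends only on `p` and `R`. -/
theorem stmt10 (p R : ℝ) (hp : p ∈ Set.Ioo (0 : ℝ) 1) (hR : 0 < R) :
    ∃ K > (0 : ℝ), ∃ N₀ : ℕ, ∀ n : ℕ, N₀ ≤ n → ∀ x : ℝ, |x| ≤ R →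
      ∀ N : ℕ, N ≤ n → (N : ℝ) = p * n + Real.sqrt n * x →
        ∃ err : ℝ, |err| ≤ K / Real.sqrt n ∧
          (n.choose N : ℝ) = (Real.sqrt (2 * Real.pi))⁻¹
            * Real.exp (-x ^ 2 / (2 * p * (1 - p)))
            * Real.exp ((N : ℝ) * Real.log ((1 - p) / p) - (n : ℝ) * Real.log (1 - p)
                - (1 / 2) * Real.log n - (1 / 2) * Real.log (p * (1 - p)))
            * Real.exp err := by
  obtain ⟨hp0, hp1⟩ := hp
  set q : ℝ := 1 - p with hqdef
  clear_value q
  have hq0 : 0 < q := by rw [hqdef]; linarith only [hp1]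
  set S : ℝ := 4*R/p + 4*R/q + 4/p + 4/q + 4 with hSdef
  clear_value S
  have hS4 : 4 ≤ S := by
    have h0 : 0 ≤ 4*R/p + 4*R/q + 4/p + 4/q := by positivity
    rw [hSdef]; linarith only [h0]
  set K : ℝ := 1 + 2/p + 2/q + (R^3/2)*(1/p^2+1/q^2) + R/p + R/q + 4*R^3/p^3 + 4*R^3/q^3
    with hKdef
  clear_value K
  refine ⟨K, by rw [hKdef]; positivity, ⌈S^2⌉₊, ?_⟩
  intro n hn x hx N hNn hNx
  set s : ℝ := Real.sqrt n with hsdef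
  clear_value s
  have hns : (n:ℝ) = s^2 := by rw [hsdef]; exact (Real.sq_sqrt (Nat.cast_nonneg n)).symm
  have hS2n : S^2 ≤ (n:ℝ) := le_trans (Nat.le_ceil (S^2)) (Nat.cast_le.mpr hn)
  have hsS : S ≤ s := by
    rw [hsdef]
    exact (Real.le_sqrt (by linarith only [hS4]) (Nat.cast_nonneg n)).mpr hS2n
  have hs4 : 4 ≤ s := le_trans hS4 hsS
  have hs1 : 1 ≤ s := by linarith only [hs4]
  have hs0 : 0 < s := by linarith only [hs4]
  have hss1 : 1 ≤ s*s := by nlinarith [hs1, hs0]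
  have hn0 : (0:ℝ) < n := by rw [hns]; positivity
  have hsRp : 4*R/p ≤ s := by
    refine le_trans ?_ hsS
    rw [hSdef]
    have h1 : 0 ≤ 4*R/q := by positivity
    have h2 : 0 ≤ 4/p := by positivity
    have h3 : 0 ≤ 4/q := by positivity
    linarith only [h1, h2, h3]
  have hsRq : 4*R/q ≤ s := by
    refine le_trans ?_ hsS
    rw [hSdef]
    have h1 : 0 ≤ 4*R/p := by positivity
    have h2 : 0 ≤ 4/p := by positivity
    have h3 : 0 ≤ 4/q := by positivity
    linarith only [h1, h2, h3]
  have hs4p : 4/p ≤ s := by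
    refine le_trans ?_ hsS
    rw [hSdef]
    have h1 : 0 ≤ 4*R/p := by positivity
    have h2 : 0 ≤ 4*R/q := by positivity
    have h3 : 0 ≤ 4/q := by positivity
    linarith only [h1, h2, h3]
  have hs4q : 4/q ≤ s := by
    refine le_trans ?_ hsS
    rw [hSdef]
    have h1 : 0 ≤ 4*R/p := by positivity
    have h2 : 0 ≤ 4*R/q := by positivity
    have h3 : 0 ≤ 4/p := by positivity
    linarith only [h1, h2, h3]
  have hps4 : 4*R ≤ p*s := by
    rw [div_le_iff₀ hp0] at hsRp; linarith only [hsRp]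
  have hqs4 : 4*R ≤ q*s := by
    rw [div_le_iff₀ hq0] at hsRq; linarith only [hsRq]
  have hps4' : 4 ≤ p*s := by rw [div_le_iff₀ hp0] at hs4p; linarith only [hs4p]
  have hqs4' : 4 ≤ q*s := by rw [div_le_iff₀ hq0] at hs4q; linarith only [hs4q]
  set t : ℝ := s * x with htdef
  clear_value t
  have hNr : (N:ℝ) = p*n + t := hNx
  set M : ℕ := n - N with hMdef
  clear_value M
  have hMreal : (M:ℝ) = (n:ℝ) - (N:ℝ) := by rw [hMdef, Nat.cast_sub hNn]
  have hMr : (M:ℝ) = q*n - t := by rw [hMreal, hNr, hqdef]; ring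
  have ht : |t| ≤ R * s := by
    rw [htdef, abs_mul, abs_of_pos hs0]
    calc s * |x| ≤ s * R := by exact mul_le_mul_of_nonneg_left hx hs0.le
      _ = R * s := mul_comm s R
  have htp : |t| ≤ p*(n:ℝ)/4 := by
    refine ht.trans ?_
    rw [hns, show p*s^2 = (p*s)*s from by ring]
    have h := mul_le_mul_of_nonneg_right hps4 hs0.le
    linarith only [h]
  have htq : |t| ≤ q*(n:ℝ)/4 := by
    refine ht.trans ?_
    rw [hns, show q*s^2 = (q*s)*s from by ring]
    have h := mul_le_mul_of_nonneg_right hqs4 hs0.le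
    linarith only [h]
  have hpn0 : (0:ℝ) < p*n := by positivity
  have hqn0 : (0:ℝ) < q*n := by positivity
  have hNlo : p*(n:ℝ)/2 ≤ (N:ℝ) := by
    have h := abs_le.mp htp
    rw [hNr]; linarith only [h.1, hpn0]
  have hMlo : q*(n:ℝ)/2 ≤ (M:ℝ) := by
    have h := abs_le.mp htq
    rw [hMr]; linarith only [h.2, hqn0]
  have hpn4 : 4 ≤ p*(n:ℝ) := by
    rw [hns, show p*s^2 = (p*s)*s from by ring]
    have h := mul_le_mul_of_nonneg_right hps4' hs0.le
    have h2 : (4:ℝ)*1 ≤ 4*s := by linarith only [hs1]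
    linarith only [h, h2]
  have hqn4 : 4 ≤ q*(n:ℝ) := by
    rw [hns, show q*s^2 = (q*s)*s from by ring]
    have h := mul_le_mul_of_nonneg_right hqs4' hs0.le
    have h2 : (4:ℝ)*1 ≤ 4*s := by linarith only [hs1]
    linarith only [h, h2]
  have hN2 : 2 ≤ N := by
    have h : (2:ℝ) ≤ (N:ℝ) := by linarith only [hNlo, hpn4]
    exact_mod_cast h
  have hM2 : 2 ≤ M := by
    have h : (2:ℝ) ≤ (M:ℝ) := by linarith only [hMlo, hqn4]
    exact_mod_cast h
  have hn2 : 2 ≤ n := by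
    have h16 : (4:ℝ)*4 ≤ s*s := by
      apply mul_le_mul hs4 hs4 (by norm_num) (by linarith only [hs4])
    have h : (2:ℝ) ≤ (n:ℝ) := by
      rw [hns, show s^2 = s*s from sq s]
      linarith only [h16]
    exact_mod_cast h
  have hN0 : (0:ℝ) < N := by linarith only [hNlo, hpn4]
  have hM0 : (0:ℝ) < M := by linarith only [hMlo, hqn4]
  -- Stirling error bounds
  have hrn := stirling_r_bound n hn2
  have hrN := stirling_r_bound N hN2
  have hrM := stirling_r_bound M hM2
  have hrnB : |Real.log (Stirling.stirlingSeq n) - Real.log (Real.sqrt Real.pi)| ≤ 1/s := by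
    rw [abs_le]
    have h1 : 1/(n:ℝ) ≤ 1/s := by
      apply one_div_le_one_div_of_le hs0
      rw [hns, show s^2 = s*s from sq s]
      have h := mul_le_mul_of_nonneg_left hs1 hs0.le
      linarith only [h]
    have h2 : (0:ℝ) ≤ 1/s := by positivity
    exact ⟨by linarith only [hrn.1, h2], le_trans hrn.2 h1⟩
  have hrNB : |Real.log (Stirling.stirlingSeq N) - Real.log (Real.sqrt Real.pi)| ≤ 2/(p*s) := by
    rw [abs_le]
    have h1 : 1/(N:ℝ) ≤ 2/(p*s) := by
      rw [div_le_div_iff₀ hN0 (by positivity)]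
      have hNlo' : (p*s)*s/2 ≤ (N:ℝ) := by
        rw [hns, show p*s^2 = (p*s)*s from by ring] at hNlo
        linarith only [hNlo]
      have h := mul_le_mul_of_nonneg_left hs1 (mul_pos hp0 hs0).le
      linarith only [hNlo', h]
    have h2 : (0:ℝ) ≤ 2/(p*s) := by positivity
    exact ⟨by linarith only [hrN.1, h2], le_trans hrN.2 h1⟩
  have hrMB : |Real.log (Stirling.stirlingSeq M) - Real.log (Real.sqrt Real.pi)| ≤ 2/(q*s) := by
    rw [abs_le]
    have h1 : 1/(M:ℝ) ≤ 2/(q*s) := by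
      rw [div_le_div_iff₀ hM0 (by positivity)]
      have hMlo' : (q*s)*s/2 ≤ (M:ℝ) := by
        rw [hns, show q*s^2 = (q*s)*s from by ring] at hMlo
        linarith only [hMlo]
      have h := mul_le_mul_of_nonneg_left hs1 (mul_pos hq0 hs0).le
      linarith only [hMlo', h]
    have h2 : (0:ℝ) ≤ 2/(q*s) := by positivity
    exact ⟨by linarith only [hrM.1, h2], le_trans hrM.2 h1⟩
  -- delta and epsilon
  set δ : ℝ := t/(p*n) with hδdef
  clear_value δ
  set ε : ℝ := t/(q*n) with hεdef
  clear_value ε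
  have hδ4 : |δ| ≤ 1/4 := by
    rw [hδdef, abs_div, abs_of_pos hpn0, div_le_iff₀ hpn0]
    linarith only [htp]
  have hε4 : |ε| ≤ 1/4 := by
    rw [hεdef, abs_div, abs_of_pos hqn0, div_le_iff₀ hqn0]
    linarith only [htq]
  have hδR : |δ| ≤ R/(p*s) := by
    rw [hδdef, abs_div, abs_of_pos hpn0, div_le_iff₀ hpn0]
    have he : R/(p*s)*(p*(n:ℝ)) = R*s := by
      rw [hns]; field_simp
    rw [he]; exact ht
  have hεR : |ε| ≤ R/(q*s) := by
    rw [hεdef, abs_div, abs_of_pos hqn0, div_le_iff₀ hqn0]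
    have he : R/(q*s)*(q*(n:ℝ)) = R*s := by
      rw [hns]; field_simp
    rw [he]; exact ht
  have h1δ : 0 < 1 + δ := by
    have h := abs_le.mp hδ4; linarith only [h.1]
  have h1ε : 0 < 1 - ε := by
    have h := abs_le.mp hε4; linarith only [h.2]
  -- Taylor bounds
  have he1 : |Real.log (1+δ) - (δ - δ^2/2)| ≤ 2*|δ|^3 := taylor_log δ hδ4
  have he2 : |Real.log (1-ε) - (-ε - ε^2/2)| ≤ 2*|ε|^3 := by
    have h := taylor_log (-ε) (by rwa [abs_neg])
    rw [show (1:ℝ) + -ε = 1 - ε from by ring,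
      show -ε - (-ε)^2/2 = -ε - ε^2/2 from by ring, abs_neg] at h
    exact h
  -- log N and log M
  have hNfac : (N:ℝ) = p*n*(1+δ) := by
    rw [hNr, hδdef]; field_simp
  have hMfac : (M:ℝ) = q*n*(1-ε) := by
    rw [hMr, hεdef]; field_simp
  have hlogN : Real.log (N:ℝ) = Real.log p + Real.log (n:ℝ) + Real.log (1+δ) := by
    rw [hNfac, Real.log_mul (by positivity) h1δ.ne', Real.log_mul hp0.ne' hn0.ne']
  have hlogM : Real.log (M:ℝ) = Real.log q + Real.log (n:ℝ) + Real.log (1-ε) := by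
    rw [hMfac, Real.log_mul (by positivity) h1ε.ne', Real.log_mul hq0.ne' hn0.ne']
  have hx2 : x^2 = t^2/(n:ℝ) := by
    rw [htdef, hns]; field_simp
  -- bracket identity
  have hbr : (N:ℝ)*(δ - δ^2/2) + (M:ℝ)*(-ε - ε^2/2)
      = x^2/(2*p*q) + t^3/(2*(n:ℝ)^2)*(1/q^2 - 1/p^2) := by
    rw [hNr, hMr, hδdef, hεdef, hx2, hqdef]
    have h1p : (1:ℝ) - p ≠ 0 := by rw [hqdef] at hq0; linarith only [hq0]
    field_simp
    ring
  set G : ℝ := ((N:ℝ)+1/2)*Real.log (1+δ) + ((M:ℝ)+1/2)*Real.log (1-ε) with hGdef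
  clear_value G
  set e₁ : ℝ := Real.log (1+δ) - (δ - δ^2/2) with he₁def
  clear_value e₁
  set e₂ : ℝ := Real.log (1-ε) - (-ε - ε^2/2) with he₂def
  clear_value e₂
  have hGeq : G = x^2/(2*p*q) + t^3/(2*(n:ℝ)^2)*(1/q^2 - 1/p^2)
      + (δ - δ^2/2)/2 + (-ε - ε^2/2)/2 + ((N:ℝ)+1/2)*e₁ + ((M:ℝ)+1/2)*e₂ := by
    rw [hGdef, he₁def, he₂def]
    linear_combination hbr
  -- log of choose
  have hch0 : (0:ℝ) < (n.choose N : ℝ) := by exact_mod_cast Nat.choose_pos hNn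
  have hfN : ((N.factorial:ℝ)) ≠ 0 := by exact_mod_cast (Nat.factorial_ne_zero N)
  have hfM : ((M.factorial:ℝ)) ≠ 0 := by exact_mod_cast (Nat.factorial_ne_zero M)
  have hc : Real.log (n.choose N : ℝ) =
      Real.log (n.factorial : ℝ) - (Real.log (N.factorial : ℝ) + Real.log (M.factorial : ℝ)) := by
    rw [Nat.cast_choose ℝ hNn, Real.log_div (by positivity) (by positivity), Real.log_mul hfN ?_]
    · rw [← hMdef]
    · rw [← hMdef]; exact hfM
  have hDn := stirling_log_factorial n (by omega)
  have hDN := stirling_log_factorial N (by omega)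
  have hDM := stirling_log_factorial M (by omega)
  have hlogqp : Real.log (q/p) = Real.log q - Real.log p := Real.log_div hq0.ne' hp0.ne'
  have hlogpq : Real.log (p*q) = Real.log p + Real.log q := Real.log_mul hp0.ne' hq0.ne'
  have hmain : Real.log (n.choose N : ℝ) = -(1/2)*Real.log (2*Real.pi)
      + ((N:ℝ)*Real.log (q/p) - (n:ℝ)*Real.log q - (1/2)*Real.log (n:ℝ) - (1/2)*Real.log (p*q))
      - G
      + ((Real.log (Stirling.stirlingSeq n) - Real.log (Real.sqrt Real.pi))
        - (Real.log (Stirling.stirlingSeq N) - Real.log (Real.sqrt Real.pi))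
        - (Real.log (Stirling.stirlingSeq M) - Real.log (Real.sqrt Real.pi))) := by
    rw [hc, hDn, hDN, hDM, hlogN, hlogM, hlogqp, hlogpq, hGdef, hMreal]
    ring
  -- the error term
  refine ⟨Real.log (n.choose N : ℝ) + (1/2)*Real.log (2*Real.pi) + x^2/(2*p*q)
      - ((N:ℝ)*Real.log (q/p) - (n:ℝ)*Real.log q - (1/2)*Real.log (n:ℝ)
        - (1/2)*Real.log (p*q)), ?_, ?_⟩
  · -- the bound
    have herr : Real.log (n.choose N : ℝ) + (1/2)*Real.log (2*Real.pi) + x^2/(2*p*q)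
        - ((N:ℝ)*Real.log (q/p) - (n:ℝ)*Real.log q - (1/2)*Real.log (n:ℝ)
          - (1/2)*Real.log (p*q))
        = ((Real.log (Stirling.stirlingSeq n) - Real.log (Real.sqrt Real.pi))
          - (Real.log (Stirling.stirlingSeq N) - Real.log (Real.sqrt Real.pi))
          - (Real.log (Stirling.stirlingSeq M) - Real.log (Real.sqrt Real.pi)))
          - t^3/(2*(n:ℝ)^2)*(1/q^2 - 1/p^2)
          - (δ - δ^2/2)/2 - (-ε - ε^2/2)/2
          - ((N:ℝ)+1/2)*e₁ - ((M:ℝ)+1/2)*e₂ := by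
      rw [hmain, hGeq]; ring
    rw [herr]
    -- bound each piece
    have b4 : |t^3/(2*(n:ℝ)^2)*(1/q^2 - 1/p^2)| ≤ (R^3/2)*(1/p^2+1/q^2)/s := by
      rw [abs_mul, abs_div, abs_pow]
      have h2 : |2*(n:ℝ)^2| = 2*(n:ℝ)^2 := abs_of_pos (by positivity)
      have h3 : |1/q^2 - 1/p^2| ≤ 1/p^2 + 1/q^2 := by
        refine (abs_sub _ _).trans ?_
        rw [abs_of_pos (by positivity : (0:ℝ) < 1/q^2), abs_of_pos (by positivity : (0:ℝ) < 1/p^2)]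
        linarith only []
      rw [h2]
      calc |t|^3/(2*(n:ℝ)^2) * |1/q^2 - 1/p^2|
          ≤ (R*s)^3/(2*(n:ℝ)^2) * (1/p^2 + 1/q^2) := by
            apply mul_le_mul ?_ h3 (abs_nonneg _) (by positivity)
            gcongr
        _ = (R^3/2)*(1/p^2+1/q^2)/s := by
            rw [hns]; field_simp
    have hRps0 : (0:ℝ) ≤ R/(p*s) := le_trans (abs_nonneg δ) hδR
    have hRqs0 : (0:ℝ) ≤ R/(q*s) := le_trans (abs_nonneg ε) hεR
    have b5 : |(δ - δ^2/2)/2| ≤ R/(p*s) := by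
      have h1 := abs_le.mp hδ4
      have h2 := abs_le.mp hδR
      have hsq : δ^2 ≤ R/(p*s)*(1/4) := by
        have ha : |δ| * |δ| ≤ |δ| * (1/4) := mul_le_mul_of_nonneg_left hδ4 (abs_nonneg δ)
        have hb : |δ| * (1/4) ≤ (R/(p*s))*(1/4) := by
          have := mul_le_mul_of_nonneg_right hδR (by norm_num : (0:ℝ) ≤ 1/4)
          linarith only [this]
        have hc2 : δ^2 = |δ| * |δ| := by rw [← sq_abs δ]; ring
        linarith only [ha, hb, hc2]
      rw [abs_le]
      constructor
      · linarith only [h2.1, hsq, hRps0, sq_nonneg δ]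
      · linarith only [h2.2, hRps0, sq_nonneg δ]
    have b6 : |(-ε - ε^2/2)/2| ≤ R/(q*s) := by
      have h1 := abs_le.mp hε4
      have h2 := abs_le.mp hεR
      have hsq : ε^2 ≤ R/(q*s)*(1/4) := by
        have ha : |ε| * |ε| ≤ |ε| * (1/4) := mul_le_mul_of_nonneg_left hε4 (abs_nonneg ε)
        have hb : |ε| * (1/4) ≤ (R/(q*s))*(1/4) := by
          have := mul_le_mul_of_nonneg_right hεR (by norm_num : (0:ℝ) ≤ 1/4)
          linarith only [this]
        have hc2 : ε^2 = |ε| * |ε| := by rw [← sq_abs ε]; ring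
        linarith only [ha, hb, hc2]
      rw [abs_le]
      constructor
      · linarith only [h2.2, hsq, hRqs0, sq_nonneg ε]
      · linarith only [h2.1, hRqs0, sq_nonneg ε]
    have hNle : (N:ℝ) ≤ (n:ℝ) := Nat.cast_le.mpr hNn
    have hMle : (M:ℝ) ≤ (n:ℝ) := by
      rw [hMreal]; linarith only [hN0]
    have hs2ge1 : (1:ℝ) ≤ s^2 := by
      rw [show s^2 = s*s from sq s]; exact hss1
    have b7 : |((N:ℝ)+1/2)*e₁| ≤ 4*R^3/(p^3*s) := by
      have hN12 : (N:ℝ)+1/2 ≤ 2*s^2 := by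
        rw [hns] at hNle; linarith only [hNle, hs2ge1]
      have hd3 : |δ|^3 ≤ (R/(p*s))^3 := pow_le_pow_left₀ (abs_nonneg δ) hδR 3
      have he1b : |e₁| ≤ 2*(R/(p*s))^3 := he1.trans (by linarith only [hd3])
      calc |((N:ℝ)+1/2)*e₁| = ((N:ℝ)+1/2)*|e₁| := by
            rw [abs_mul, abs_of_pos (by positivity)]
        _ ≤ (2*s^2)*(2*(R/(p*s))^3) :=
            mul_le_mul hN12 he1b (abs_nonneg _) (by positivity)
        _ = 4*R^3/(p^3*s) := by
            field_simp
            ring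
    have b8 : |((M:ℝ)+1/2)*e₂| ≤ 4*R^3/(q^3*s) := by
      have hM12 : (M:ℝ)+1/2 ≤ 2*s^2 := by
        rw [hns] at hMle; linarith only [hMle, hs2ge1]
      have hd3 : |ε|^3 ≤ (R/(q*s))^3 := pow_le_pow_left₀ (abs_nonneg ε) hεR 3
      have he2b : |e₂| ≤ 2*(R/(q*s))^3 := he2.trans (by linarith only [hd3])
      calc |((M:ℝ)+1/2)*e₂| = ((M:ℝ)+1/2)*|e₂| := by
            rw [abs_mul, abs_of_pos (by positivity)]
        _ ≤ (2*s^2)*(2*(R/(q*s))^3) :=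
            mul_le_mul hM12 he2b (abs_nonneg _) (by positivity)
        _ = 4*R^3/(q^3*s) := by
            field_simp
            ring
    have c1 := abs_le.mp hrnB
    have c2 := abs_le.mp hrNB
    have c3 := abs_le.mp hrMB
    have c4 := abs_le.mp b4
    have c5 := abs_le.mp b5
    have c6 := abs_le.mp b6
    have c7 := abs_le.mp b7
    have c8 := abs_le.mp b8
    have hsum : 1/s + 2/(p*s) + 2/(q*s) + (R^3/2)*(1/p^2+1/q^2)/s + R/(p*s) + R/(q*s)
        + 4*R^3/(p^3*s) + 4*R^3/(q^3*s) = K/s := by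
      rw [hKdef]; field_simp
    rw [abs_le]
    constructor
    · linarith only [c1.1, c1.2, c2.1, c2.2, c3.1, c3.2, c4.1, c4.2, c5.1, c5.2, c6.1, c6.2,
        c7.1, c7.2, c8.1, c8.2, hsum]
    · linarith only [c1.1, c1.2, c2.1, c2.2, c3.1, c3.2, c4.1, c4.2, c5.1, c5.2, c6.1, c6.2,
        c7.1, c7.2, c8.1, c8.2, hsum]
  · -- the equation
    have h2π : (0:ℝ) < 2*Real.pi := by positivity
    have hexp : (Real.sqrt (2*Real.pi))⁻¹ = Real.exp (-((1/2)*Real.log (2*Real.pi))) := by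
      have hls : Real.log (Real.sqrt (2*Real.pi)) = (1/2)*Real.log (2*Real.pi) := by
        rw [Real.log_sqrt h2π.le]; ring
      rw [← hls, Real.exp_neg, Real.exp_log (Real.sqrt_pos.mpr h2π)]
    rw [hexp, ← Real.exp_add, ← Real.exp_add, ← Real.exp_add]
    conv_lhs => rw [← Real.exp_log hch0]
    congr 1
    ring
end

section
/- Fix k ∈ ℕ and integers 0 < m < T with n = T − m. Let x, y ∈ 𝔚_k with T ≥ y_i − x_i ≥ 0 for all i, and let (L₁,…,L_k) be uniformly distributed on the set Ω_avoid(0,T,x,y) of k-tuples of non-crossing up-right paths from x to y. Then for any integers λ₁ ≥ λ₂ ≥ ⋯ ≥ λ_k, P( L₁(m) = λ₁, …, L_k(m) = λ_k ) = det( C(m, λ_i − x_j − i + j) )_{1≤i,j≤k} · det( C(n, y_i − λ_j − i + j) )_{1≤i,j≤k} / det( C(T, y_i − x_j − i + j) )_{1≤i,j≤k}, where C(n,r) is the binomial coefficient (with C(n,r) = 0 when r < 0 or r > n). -/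
open Finset

namespace Stmt11

/-- The set of `k`-tuples of non-crossing up-right paths on `[[0,t]]` from `x` to `y`. -/
def Om' (k t : ℕ) (x y : Fin k → ℤ) : Set (Fin k → Fin (t+1) → ℤ) :=
  {L | (∀ i, L i 0 = x i) ∧ (∀ i, L i (Fin.last t) = y i) ∧
    (∀ i, ∀ j : Fin t,
      L i j.succ = L i j.castSucc ∨ L i j.succ = L i j.castSucc + 1) ∧
    (∀ r : Fin (t + 1), ∀ i j : Fin k, i ≤ j → L j r ≤ L i r)}

/-- `y` minus the indicator of `s`. -/
def zz {k : ℕ} (y : Fin k → ℤ) (s : Finset (Fin k)) : Fin k → ℤ :=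
  fun i => y i - if i ∈ s then 1 else 0

/-- Recursive count of non-crossing path tuples. -/
noncomputable def cnt (k : ℕ) : ℕ → (Fin k → ℤ) → (Fin k → ℤ) → ℕ
  | 0, x, y => if x = y then 1 else 0
  | (t+1), x, y => ∑ s : Finset (Fin k),
      if Antitone (zz y s) then cnt k t x (zz y s) else 0

lemma val_bounds {k t : ℕ} {x y : Fin k → ℤ} {L : Fin k → Fin (t+1) → ℤ}
    (hL : L ∈ Om' k t x y) (i : Fin k) (j : Fin (t+1)) :
    x i ≤ L i j ∧ L i j ≤ x i + j.val := by
  obtain ⟨h0, hlast, hstep, hcross⟩ := hL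
  induction j using Fin.induction with
  | zero => simp [h0 i]
  | succ j ih =>
    rcases hstep i j with h | h <;> rw [h] <;>
      simp only [Fin.val_succ, Fin.coe_castSucc] at * <;> push_cast at * <;> omega

lemma Om'_finite (k t : ℕ) (x y : Fin k → ℤ) : (Om' k t x y).Finite := by
  apply Set.Finite.subset (Set.Finite.pi
    (fun i : Fin k => Set.Finite.pi (fun j : Fin (t+1) => Set.finite_Icc (x i) (x i + t))))
  intro L hL
  simp only [Set.mem_pi, Set.mem_univ, forall_true_left, Set.mem_Icc]
  intro i j
  have h1 := val_bounds hL i j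
  have h2 : (j.val : ℤ) ≤ t := by exact_mod_cast Nat.le_of_lt_succ j.isLt
  omega

lemma ncard_partition {α ι : Type*} [Fintype ι] {S : Set α} {f : ι → Set α}
    (hS : S.Finite) (hsub : ∀ i, f i ⊆ S) (hcov : ∀ a ∈ S, ∃ i, a ∈ f i)
    (hdisj : ∀ i j, i ≠ j → Disjoint (f i) (f j)) :
    S.ncard = ∑ i, (f i).ncard := by
  classical
  have hf : ∀ i, (f i).Finite := fun i => hS.subset (hsub i)
  have key : hS.toFinset = Finset.univ.biUnion (fun i => (hf i).toFinset) := by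
    ext a
    simp only [Set.Finite.mem_toFinset, Finset.mem_biUnion, Finset.mem_univ, true_and]
    constructor
    · exact hcov a
    · rintro ⟨i, hi⟩; exact hsub i hi
  rw [Set.ncard_eq_toFinset_card S hS, key, Finset.card_biUnion]
  · exact Finset.sum_congr rfl fun i _ => (Set.ncard_eq_toFinset_card _ (hf i)).symm
  · intro i _ j _ hij
    simp only [Function.onFun]
    rw [Finset.disjoint_left]
    intro a ha hb
    exact Set.disjoint_left.1 (hdisj i j hij) ((Set.Finite.mem_toFinset _).1 ha)
      ((Set.Finite.mem_toFinset _).1 hb)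

lemma step_lemma {k t : ℕ} (x y : Fin k → ℤ) (hy : Antitone y)
    (m : ℕ) (hm : m ≤ t) (C : (Fin k → ℤ) → Prop) :
    {L ∈ Om' k (t+1) x y | C (fun i => L i ⟨m, by omega⟩)}.ncard
      = ∑ s : Finset (Fin k), if Antitone (zz y s) then
          {M ∈ Om' k t x (zz y s) | C (fun i => M i ⟨m, by omega⟩)}.ncard else 0 := by
  classical
  set S := {L ∈ Om' k (t+1) x y | C (fun i => L i ⟨m, by omega⟩)} with hSdef
  set f : Finset (Fin k) → Set (Fin k → Fin (t+2) → ℤ) :=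
    fun s => {L ∈ S | (fun i => L i ⟨t, by omega⟩) = zz y s} with hfdef
  have hSfin : S.Finite := (Om'_finite k (t+1) x y).subset (fun L hL => hL.1)
  have hpart : S.ncard = ∑ s, (f s).ncard := by
    apply ncard_partition hSfin (fun s => Set.sep_subset _ _)
    · intro L hL
      refine ⟨Finset.univ.filter (fun i => L i ⟨t, by omega⟩ ≠ y i), hL, ?_⟩
      funext i
      obtain ⟨⟨h0, hlast, hstep, hcross⟩, -⟩ := hL
      have hcastt : (Fin.last t).castSucc = (⟨t, by omega⟩ : Fin (t+2)) := rfl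
      have hstep' := hstep i (Fin.last t)
      rw [Fin.succ_last, hlast i, hcastt] at hstep'
      by_cases hc : L i ⟨t, by omega⟩ = y i
      · simp [zz, hc]
      · have h1 : y i = L i ⟨t, by omega⟩ + 1 := by
          rcases hstep' with h | h
          · exact absurd h.symm hc
          · exact h
        simp only [zz, Finset.mem_filter, Finset.mem_univ, true_and, hc, if_pos,
          not_false_iff]
        omega
    · intro s s' hss'
      rw [Set.disjoint_left]
      rintro L ⟨-, h1⟩ ⟨-, h2⟩
      apply hss'
      ext i
      have h3 := congrFun (h1.symm.trans h2) i
      simp only [zz] at h3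
      by_cases h : i ∈ s <;> by_cases h' : i ∈ s' <;>
        simp only [h, h', if_pos, if_neg, if_true, if_false, not_true, not_false_iff] at h3 ⊢ <;>
        omega
  rw [hpart]
  apply Finset.sum_congr rfl
  intro s _
  by_cases hanti : Antitone (zz y s)
  · rw [if_pos hanti]
    set R : (Fin k → Fin (t+2) → ℤ) → (Fin k → Fin (t+1) → ℤ) :=
      fun L i j => L i j.castSucc with hRdef
    have hinj : Set.InjOn R (f s) := by
      rintro L ⟨⟨⟨-, hlast, -, -⟩, -⟩, -⟩ L' ⟨⟨⟨-, hlast', -, -⟩, -⟩, -⟩ hEq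
      funext i j
      refine Fin.lastCases ?_ (fun j' => ?_) j
      · rw [hlast i, hlast' i]
      · exact congrFun (congrFun hEq i) j'
    have himg : R '' (f s) = {M ∈ Om' k t x (zz y s) | C (fun i => M i ⟨m, by omega⟩)} := by
      ext M
      constructor
      · rintro ⟨L, ⟨⟨⟨h0, hlast, hstep, hcross⟩, hC⟩, hval⟩, rfl⟩
        refine ⟨⟨fun i => h0 i, fun i => congrFun hval i, fun i j => ?_, 
          fun r i j hij => hcross _ i j hij⟩, hC⟩
        have h := hstep i j.castSucc
        rw [Fin.succ_castSucc] at h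
        exact h
      · rintro ⟨⟨h0, hlast, hstep, hcross⟩, hC⟩
        refine ⟨fun i j => if h : (j : ℕ) < t + 1 then M i ⟨j, h⟩ else y i,
          ⟨⟨⟨fun i => ?_, fun i => ?_, fun i j => ?_, fun r i j hij => ?_⟩, ?_⟩, ?_⟩, ?_⟩
        · simp only [Fin.val_zero]
          refine (dif_pos (Nat.succ_pos t)).trans ?_
          rw [← h0 i]
          exact congrArg (M i) (by ext; simp)
        · simp only [Fin.val_last]
          rw [dif_neg (by omega)]
        · -- step condition
          by_cases hj : (j : ℕ) < t
          · have e1 : ((j.succ : Fin (t+2)) : ℕ) = j + 1 := rfl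
            have e2 : ((j.castSucc : Fin (t+2)) : ℕ) = j := rfl
            simp only [e1, e2, dif_pos (by omega : (j:ℕ) + 1 < t + 1),
              dif_pos (by omega : (j:ℕ) < t + 1)]
            have h := hstep i ⟨j, hj⟩
            simpa using h
          · have hjt : (j : ℕ) = t := by omega
            have e1 : ((j.succ : Fin (t+2)) : ℕ) = t + 1 := by simp [hjt]
            have e2 : ((j.castSucc : Fin (t+2)) : ℕ) = t := by simp [hjt]
            simp only [e1, e2, dif_neg (by omega : ¬ (t + 1 < t + 1)),
              dif_pos (by omega : t < t + 1)]
            have hM : M i ⟨t, by omega⟩ = zz y s i := by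
              rw [← hlast i]; congr 1
            rw [hM]
            simp only [zz]
            by_cases hmem : i ∈ s
            · right; simp [hmem]
            · left; simp [hmem]
        · -- noncrossing
          by_cases hr : (r : ℕ) < t + 1
          · simp only [dif_pos hr]
            exact hcross ⟨r, hr⟩ i j hij
          · simp only [dif_neg hr]
            exact hy hij
        · -- constraint C
          simpa only [dif_pos (by omega : m < t + 1)] using hC
        · -- value at time t
          funext i
          simp only [dif_pos (by omega : t < t + 1)]
          rw [← hlast i]; congr 1
        · -- R of extension = M
          funext i j
          simp only [hRdef]
          rw [dif_pos (by exact j.isLt : ((j.castSucc : Fin (t+2)) : ℕ) < t + 1)]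
          congr 1
    rw [← himg, Set.ncard_image_of_injOn hinj]
  · rw [if_neg hanti]
    have hempty : f s = ∅ := by
      ext L
      simp only [Set.mem_empty_iff_false, iff_false]
      rintro ⟨⟨⟨-, -, -, hcross⟩, -⟩, hval⟩
      exact hanti (fun a b hab => by
        rw [← congrFun hval a, ← congrFun hval b]
        exact hcross _ a b hab)
    rw [hempty, Set.ncard_empty]

lemma count_base {k : ℕ} (x y : Fin k → ℤ) (hy : Antitone y) :
    (Om' k 0 x y).ncard = if x = y then 1 else 0 := by
  by_cases hxy : x = y
  · subst hxy
    rw [if_pos rfl]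
    have : Om' k 0 x x = {fun i _ => x i} := by
      ext L
      constructor
      · rintro ⟨h0, -, -, -⟩
        funext i j
        have : j = 0 := by omega
        rw [this, h0 i]
      · rintro rfl
        refine ⟨fun i => rfl, fun i => rfl, fun i j => j.elim0, fun r i j hij => hy hij⟩
    rw [this, Set.ncard_singleton]
  · rw [if_neg hxy]
    have : Om' k 0 x y = ∅ := by
      ext L
      simp only [Set.mem_empty_iff_false, iff_false]
      rintro ⟨h0, hlast, -, -⟩
      exact hxy (funext fun i => by rw [← h0 i, ← hlast i]; rfl)
    rw [this, Set.ncard_empty]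

lemma count_eq {k : ℕ} (t : ℕ) (x y : Fin k → ℤ) (hy : Antitone y) :
    (Om' k t x y).ncard = cnt k t x y := by
  induction t generalizing y with
  | zero => rw [count_base x y hy]; rfl
  | succ t ih =>
    have hset : {L ∈ Om' k (t+1) x y |
        (fun _ : Fin k → ℤ => True) (fun i => L i ⟨0, by omega⟩)} = Om' k (t+1) x y := by
      ext L; simp
    have h := step_lemma x y hy 0 (Nat.zero_le t) (fun _ => True)
    rw [hset] at h
    rw [h, cnt]
    apply Finset.sum_congr rfl
    intro s _
    by_cases hanti : Antitone (zz y s)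
    · rw [if_pos hanti, if_pos hanti, ← ih (zz y s) hanti]
      congr 1
      ext L; simp
    · rw [if_neg hanti, if_neg hanti]

lemma count_constrained {k : ℕ} (t m : ℕ) (hm : m ≤ t) (x lam y : Fin k → ℤ)
    (hy : Antitone y) (hlam : Antitone lam) :
    {L ∈ Om' k t x y | ∀ i, L i ⟨m, by omega⟩ = lam i}.ncard
      = cnt k m x lam * cnt k (t - m) lam y := by
  induction t generalizing y with
  | zero =>
    have hm0 : m = 0 := Nat.le_zero.mp hm
    subst hm0
    have hz : (⟨0, by omega⟩ : Fin (0+1)) = 0 := rfl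
    by_cases hxl : x = lam
    · have hset : {L ∈ Om' k 0 x y | ∀ i, L i ⟨0, by omega⟩ = lam i} = Om' k 0 x y := by
        ext L
        simp only [Set.mem_setOf_eq, and_iff_left_iff_imp]
        intro hL i
        rw [hz, hL.1 i, ← hxl]
      rw [hset, count_base x y hy, Nat.sub_zero]
      show _ = cnt k 0 x lam * cnt k 0 lam y
      rw [show cnt k 0 x lam = if x = lam then 1 else 0 from rfl,
        show cnt k 0 lam y = if lam = y then 1 else 0 from rfl, if_pos hxl, ← hxl]
      by_cases hxy : x = y <;> simp [hxy]
    · have hset : {L ∈ Om' k 0 x y | ∀ i, L i ⟨0, by omega⟩ = lam i} = ∅ := by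
        ext L
        simp only [Set.mem_empty_iff_false, iff_false, Set.mem_setOf_eq, not_and]
        intro hL hc
        exact hxl (funext fun i => by rw [← hL.1 i, ← hc i, hz])
      rw [hset, Set.ncard_empty,
        show cnt k 0 x lam = if x = lam then 1 else 0 from rfl, if_neg hxl, zero_mul]
  | succ t ih =>
    by_cases hmt : m ≤ t
    · have h := step_lemma x y hy m hmt (fun v => ∀ i, v i = lam i)
      rw [h]
      have he : t + 1 - m = (t - m) + 1 := Nat.succ_sub hmt
      rw [he, cnt, Finset.mul_sum]
      apply Finset.sum_congr rfl
      intro s _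
      by_cases hanti : Antitone (zz y s)
      · rw [if_pos hanti, if_pos hanti, ih hmt (zz y s) hanti]
      · rw [if_neg hanti, if_neg hanti, mul_zero]
    · have hmt1 : m = t + 1 := by omega
      subst hmt1
      have hz : (⟨t + 1, by omega⟩ : Fin (t+1+1)) = Fin.last (t+1) := rfl
      by_cases hly : lam = y
      · have hset : {L ∈ Om' k (t+1) x y | ∀ i, L i ⟨t+1, by omega⟩ = lam i}
            = Om' k (t+1) x y := by
          ext L
          simp only [Set.mem_setOf_eq, and_iff_left_iff_imp]
          intro hL i
          rw [hz, hL.2.1 i, hly]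
        rw [hset, count_eq (t+1) x y hy, Nat.sub_self,
          show cnt k 0 lam y = if lam = y then 1 else 0 from rfl, if_pos hly, mul_one, hly]
      · have hset : {L ∈ Om' k (t+1) x y | ∀ i, L i ⟨t+1, by omega⟩ = lam i} = ∅ := by
          ext L
          simp only [Set.mem_empty_iff_false, iff_false, Set.mem_setOf_eq, not_and]
          intro hL hc
          exact hly (funext fun i => by rw [← hL.2.1 i, ← hc i, hz])
        rw [hset, Set.ncard_empty, Nat.sub_self,
          show cnt k 0 lam y = if lam = y then 1 else 0 from rfl, if_neg hly, mul_zero]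

noncomputable def b (n : ℕ) (r : ℤ) : ℝ := if 0 ≤ r then (n.choose r.toNat : ℝ) else 0

lemma b_zero (r : ℤ) : b 0 r = if r = 0 then 1 else 0 := by
  unfold b
  rcases lt_trichotomy r 0 with h | h | h
  · rw [if_neg (by omega), if_neg (by omega)]
  · subst h; norm_num
  · rw [if_pos (by omega), if_neg (by omega)]
    obtain ⟨u, hu⟩ : ∃ u, r.toNat = u + 1 := ⟨(r-1).toNat, by omega⟩
    rw [hu, Nat.choose_zero_succ]
    simp

lemma b_pascal (t : ℕ) (r : ℤ) : b (t+1) r = b t (r-1) + b t r := by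
  unfold b
  rcases lt_trichotomy r 0 with h | h | h
  · rw [if_neg (by omega), if_neg (by omega), if_neg (by omega)]
    ring
  · subst h; norm_num
  · rcases eq_or_lt_of_le h.le with h0 | h0
    · rw [← h0]; norm_num
    · rw [if_pos (by omega), if_pos (by omega), if_pos (by omega)]
      obtain ⟨u, hu⟩ : ∃ u, r.toNat = u + 1 := ⟨(r-1).toNat, by omega⟩
      have h2 : (r-1).toNat = u := by omega
      rw [hu, h2, Nat.choose_succ_succ]
      push_cast
      ring

lemma sub_inj {k : ℕ} {x : Fin k → ℤ} (hx : Antitone x) {i j : Fin k}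
    (h : x i - (i.val : ℤ) = x j - (j.val : ℤ)) : i = j := by
  rcases lt_trichotomy i j with hij | hij | hij
  · have h1 : x j ≤ x i := hx hij.le
    have h2 : (i.val : ℤ) < (j.val : ℤ) := by exact_mod_cast (hij : i.val < j.val)
    omega
  · exact hij
  · have h1 : x i ≤ x j := hx hij.le
    have h2 : (j.val : ℤ) < (i.val : ℤ) := by exact_mod_cast (hij : j.val < i.val)
    omega

lemma det_eq {k : ℕ} (t : ℕ) (x y : Fin k → ℤ) (hx : Antitone x) (hy : Antitone y) :
    (cnt k t x y : ℝ) = Matrix.det (Matrix.of fun i j : Fin k =>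
      b t (y i - x j - (i.val : ℤ) + (j.val : ℤ))) := by
  induction t generalizing y with
  | zero =>
    rw [show cnt k 0 x y = if x = y then 1 else 0 from rfl]
    by_cases hxy : x = y
    · subst hxy
      rw [if_pos rfl]
      have hone : (Matrix.of fun i j : Fin k =>
          b 0 (x i - x j - (i.val : ℤ) + (j.val : ℤ))) = 1 := by
        ext i j
        rw [Matrix.of_apply, b_zero, Matrix.one_apply]
        by_cases h : i = j
        · subst h
          rw [if_pos (by ring), if_pos rfl]
        · rw [if_neg (fun hc => h (sub_inj hx (by omega))), if_neg h]
      rw [hone, Matrix.det_one]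
      norm_num
    · rw [if_neg hxy, Nat.cast_zero, Matrix.det_apply]
      symm
      apply Finset.sum_eq_zero
      intro σ _
      rcases eq_or_ne (∏ i, (Matrix.of fun i j : Fin k =>
          b 0 (y i - x j - (i.val : ℤ) + (j.val : ℤ))) (σ i) i) 0 with hp | hp
      · rw [hp, smul_zero]
      · exfalso
        rw [Finset.prod_ne_zero_iff] at hp
        have hcond : ∀ i : Fin k, y (σ i) - ((σ i).val : ℤ) = x i - (i.val : ℤ) := by
          intro i
          have h1 := hp i (Finset.mem_univ i)
          rw [Matrix.of_apply, b_zero] at h1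
          by_contra hc
          exact h1 (if_neg (fun h => hc (by omega)))
        have hmono : StrictMono σ := by
          intro a b hab
          have ha := hcond a
          have hb := hcond b
          rcases lt_trichotomy (σ a) (σ b) with h' | h' | h'
          · exact h'
          · exact absurd (σ.injective h') hab.ne
          · exfalso
            have h1 : y (σ a) ≤ y (σ b) := hy h'.le
            have h2 : ((σ b).val : ℤ) < ((σ a).val : ℤ) := by
              exact_mod_cast (h' : (σ b).val < (σ a).val)
            have h3 : x b ≤ x a := hx hab.le
            have h4 : (a.val : ℤ) < (b.val : ℤ) := by
              exact_mod_cast (hab : a.val < b.val)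
            omega
        have hid : ∀ i, σ i = i := by
          haveI : WellFoundedLT (Fin k) := Finite.to_wellFoundedLT
          have hr : Set.range σ = Set.range (id : Fin k → Fin k) := by
            rw [σ.surjective.range_eq, Set.range_id]
          have := (hmono.range_inj (strictMono_id (α := Fin k))).1 hr
          intro i
          exact congrFun this i
        apply hxy
        funext i
        have h5 := hcond i
        rw [hid i] at h5
        omega
  | succ t ih =>
    have hM : (Matrix.of fun i j : Fin k => b (t+1) (y i - x j - (i.val : ℤ) + (j.val : ℤ)))
        = (Matrix.of fun i j : Fin k => b t (y i - 1 - x j - (i.val : ℤ) + (j.val : ℤ)))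
          + (Matrix.of fun i j : Fin k => b t (y i - x j - (i.val : ℤ) + (j.val : ℤ))) := by
      ext i j
      simp only [Matrix.of_apply, Matrix.add_apply]
      have he : y i - 1 - x j - (i.val : ℤ) + (j.val : ℤ)
          = (y i - x j - (i.val : ℤ) + (j.val : ℤ)) - 1 := by ring
      rw [b_pascal, he]
    rw [hM]
    set P := Matrix.of fun i j : Fin k => b t (y i - 1 - x j - (i.val : ℤ) + (j.val : ℤ)) with hP
    set Q := Matrix.of fun i j : Fin k => b t (y i - x j - (i.val : ℤ) + (j.val : ℤ)) with hQ
    have hdet : Matrix.det (P + Q) = ∑ s : Finset (Fin k), Matrix.det (s.piecewise P Q) :=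
      Matrix.detRowAlternating.toMultilinearMap.map_add_univ P Q
    rw [hdet, cnt, Nat.cast_sum]
    apply Finset.sum_congr rfl
    intro s _
    by_cases hanti : Antitone (zz y s)
    · rw [if_pos hanti]
      have hpiece : s.piecewise P Q = Matrix.of fun i j : Fin k =>
          b t (zz y s i - x j - (i.val : ℤ) + (j.val : ℤ)) := by
        ext i j
        by_cases hi : i ∈ s
        · erw [Finset.piecewise_eq_of_mem _ _ _ hi]
          have hzi : zz y s i = y i - 1 := by simp [zz, hi]
          simp [hP, hzi]
        · erw [Finset.piecewise_eq_of_notMem _ _ _ hi]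
          have hzi : zz y s i = y i := by simp [zz, hi]
          simp [hQ, hzi]
      rw [hpiece, ← ih (zz y s) hanti]
    · rw [if_neg hanti, Nat.cast_zero]
      have hk0 : k ≠ 0 := by
        intro h
        subst h
        exact hanti (fun a b _ => b.elim0)
      obtain ⟨k', rfl⟩ : ∃ k', k = k' + 1 := ⟨k - 1, by omega⟩
      rw [Fin.antitone_iff_succ_le, not_forall] at hanti
      obtain ⟨i, hi⟩ := hanti
      push_neg at hi
      have hys : y i.succ ≤ y i.castSucc := hy (Fin.castSucc_le_succ i)
      have hkey : y i.succ = y i.castSucc ∧ i.castSucc ∈ s ∧ i.succ ∉ s := by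
        by_cases h1 : i.castSucc ∈ s <;> by_cases h2 : i.succ ∈ s <;>
          simp [zz, h1, h2] at hi <;>
          first
            | exact ⟨by omega, h1, h2⟩
            | omega
      obtain ⟨hyy, hmem1, hmem2⟩ := hkey
      symm
      apply Matrix.det_zero_of_row_eq (show i.castSucc ≠ i.succ from (Fin.castSucc_lt_succ : i.castSucc < i.succ).ne)
      erw [Finset.piecewise_eq_of_mem _ _ _ hmem1, Finset.piecewise_eq_of_notMem _ _ _ hmem2]
      funext j
      simp only [hP, hQ, Matrix.of_apply]
      congr 1
      have hv : ((i.succ).val : ℤ) = ((i.castSucc).val : ℤ) + 1 := by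
        simp [Fin.val_succ, Fin.coe_castSucc]
      omega

end Stmt11

theorem stmt11 (k T m : ℕ) (hk : 0 < k) (hm : 0 < m) (hmT : m < T)
    (x y : Fin k → ℤ) (hx : Antitone x) (hy : Antitone y)
    (hxy : ∀ i, 0 ≤ y i - x i ∧ y i - x i ≤ (T : ℤ))
    (lam : Fin k → ℤ) (hlam : Antitone lam)
    (Om : Set (Fin k → Fin (T + 1) → ℤ))
    (hOm : Om = {L | (∀ i, L i 0 = x i) ∧ (∀ i, L i (Fin.last T) = y i) ∧
      (∀ i, ∀ j : Fin T,
        L i j.succ = L i j.castSucc ∨ L i j.succ = L i j.castSucc + 1) ∧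
      (∀ r : Fin (T + 1), ∀ i j : Fin k, i ≤ j → L j r ≤ L i r)})
    (bin : ℕ → ℤ → ℝ)
    (hbin : ∀ n r, bin n r = if 0 ≤ r then (n.choose r.toNat : ℝ) else 0) :
    (Set.ncard {L ∈ Om | ∀ i : Fin k, L i ⟨m, by omega⟩ = lam i} : ℝ)
        / (Set.ncard Om : ℝ) =
      Matrix.det (Matrix.of fun i j : Fin k =>
          bin m (lam i - x j - (i.val : ℤ) + (j.val : ℤ)))
        * Matrix.det (Matrix.of fun i j : Fin k =>
          bin (T - m) (y i - lam j - (i.val : ℤ) + (j.val : ℤ)))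
        / Matrix.det (Matrix.of fun i j : Fin k =>
          bin T (y i - x j - (i.val : ℤ) + (j.val : ℤ))) := by
  have hb : bin = Stmt11.b := funext fun n => funext fun r => (hbin n r)
  subst hb hOm
  have h1 : Stmt11.Om' k T x y = {L | (∀ i, L i 0 = x i) ∧ (∀ i, L i (Fin.last T) = y i) ∧
      (∀ i, ∀ j : Fin T,
        L i j.succ = L i j.castSucc ∨ L i j.succ = L i j.castSucc + 1) ∧
      (∀ r : Fin (T + 1), ∀ i j : Fin k, i ≤ j → L j r ≤ L i r)} := rfl
  rw [← h1]
  rw [Stmt11.count_constrained T m hmT.le x lam y hy hlam,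
    Stmt11.count_eq T x y hy,
    ← Stmt11.det_eq m x lam hx hlam, ← Stmt11.det_eq (T-m) lam y hlam hy,
    ← Stmt11.det_eq T x y hx hy]
  push_cast
  ring
end

section
/- Fix k ∈ ℕ, integers T₀ < T₁, a subset S ⊆ [[T₀,T₁]], a function g : [[T₀,T₁]] → [−∞,∞), and vectors x, y, x′, y′ ∈ 𝔚_k with x_i ≤ x′_i and y_i ≤ y′_i for all i. Assume Ω_avoid(T₀,T₁,x,y,∞,g;S) and Ω_avoid(T₀,T₁,x′,y′,∞,g;S) are both nonempty. Then there exists a probability space supporting two [[1,k]]-indexed Bernoulli line ensembles 𝔏^t and 𝔏^b on [[T₀,T₁]] such that 𝔏^t is uniformly distributed on Ω_avoid(T₀,T₁,x′,y′,∞,g;S), 𝔏^b is uniformly distributed on Ω_avoid(T₀,T₁,x,y,∞,g;S), and almost surely L^t_i(r) ≥ L^b_i(r) for all i ∈ [[1,k]] and r ∈ [[T₀,T₁]]. -/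
open MeasureTheory
open scoped ENNReal FinsetFamily
set_option synthInstance.maxHeartbeats 1000000
set_option maxHeartbeats 1000000

/-- `L` is an up-right path on `[[T₀,T₁]]`. -/
def UpRightOn (T₀ T₁ : ℤ) (L : ℤ → ℤ) : Prop :=
  ∀ r : ℤ, T₀ ≤ r → r < T₁ → (L (r + 1) = L r ∨ L (r + 1) = L r + 1)

/-- The set `Ω_avoid(T₀,T₁,x,y,∞,g;S)` of `k`-tuples of up-right paths on `[[T₀,T₁]]`
with entrance data `x` and exit data `y`, weakly ordered and staying above `g` at all
times in `S` (paths are normalized to vanish outside `[[T₀,T₁]]`). -/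
def OmegaAvoidS (k : ℕ) (T₀ T₁ : ℤ) (x y : Fin k → ℤ)
    (g : ℤ → WithBot ℤ) (S : Set ℤ) : Set (Fin k → ℤ → ℤ) :=
  {L | (∀ i, UpRightOn T₀ T₁ (L i)) ∧ (∀ i, L i T₀ = x i) ∧ (∀ i, L i T₁ = y i) ∧
    (∀ r ∈ S, (∀ i j : Fin k, i ≤ j → L j r ≤ L i r) ∧
      ∀ i, g r ≤ (L i r : WithBot ℤ)) ∧
    (∀ i, ∀ r : ℤ, r < T₀ ∨ T₁ < r → L i r = 0)}

/-- up-right paths are nondecreasing on `[[T₀,T₁]]`. -/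
lemma upRightOn_le {T₀ T₁ : ℤ} {L : ℤ → ℤ} (h : UpRightOn T₀ T₁ L) :
    ∀ ⦃r s : ℤ⦄, T₀ ≤ r → r ≤ s → s ≤ T₁ → L r ≤ L s := by
  intro r s h1 h2 h3
  have key : ∀ n, r ≤ n → (n ≤ T₁ → L r ≤ L n) := by
    refine Int.le_induction (fun _ => le_rfl) ?_
    intro n hn ih h'
    have hior := h n (h1.trans hn) (by omega)
    have := ih (by omega)
    omega
  exact key s h2 h3

/-- values of members of `OmegaAvoidS` are bounded on `[[T₀,T₁]]`. -/
lemma omegaAvoidS_bdd {k : ℕ} {T₀ T₁ : ℤ} {x y : Fin k → ℤ} {g : ℤ → WithBot ℤ}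
    {S : Set ℤ} {L : Fin k → ℤ → ℤ} (hL : L ∈ OmegaAvoidS k T₀ T₁ x y g S)
    (i : Fin k) {r : ℤ} (h1 : T₀ ≤ r) (h2 : r ≤ T₁) : x i ≤ L i r ∧ L i r ≤ y i := by
  obtain ⟨hup, hx, hy, -, -⟩ := hL
  constructor
  · rw [← hx i]; exact upRightOn_le (hup i) le_rfl h1 h2
  · rw [← hy i]; exact upRightOn_le (hup i) h1 h2 le_rfl

/-- `OmegaAvoidS` is a finite set. -/
lemma omegaAvoidS_finite (k : ℕ) (T₀ T₁ : ℤ) (x y : Fin k → ℤ) (g : ℤ → WithBot ℤ)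
    (S : Set ℤ) : (OmegaAvoidS k T₀ T₁ x y g S).Finite := by
  classical
  set A := OmegaAvoidS k T₀ T₁ x y g S with hA
  set Φ : (Fin k → ℤ → ℤ) → (Fin k → ↥(Finset.Icc T₀ T₁) → ℤ) :=
    fun L i r => L i (r : ℤ) with hΦ
  have hfin : (Set.univ.pi fun i : Fin k =>
      Set.univ.pi fun _ : ↥(Finset.Icc T₀ T₁) => Set.Icc (x i) (y i)).Finite :=
    Set.Finite.pi fun i => Set.Finite.pi fun _ => Set.finite_Icc _ _
  have himg : Φ '' A ⊆ Set.univ.pi fun i : Fin k =>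
      Set.univ.pi fun _ : ↥(Finset.Icc T₀ T₁) => Set.Icc (x i) (y i) := by
    rintro _ ⟨L, hL, rfl⟩ i -
    rintro ⟨r, hr⟩ -
    rw [Finset.mem_Icc] at hr
    exact ⟨(omegaAvoidS_bdd hL i hr.1 hr.2).1, (omegaAvoidS_bdd hL i hr.1 hr.2).2⟩
  have hinj : Set.InjOn Φ A := by
    intro L hL M hM h
    funext i r
    by_cases hr : r ∈ Finset.Icc T₀ T₁
    · exact congrFun (congrFun h i) ⟨r, hr⟩
    · rw [Finset.mem_Icc] at hr
      rw [hL.2.2.2.2 i r (by omega), hM.2.2.2.2 i r (by omega)]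
  exact Set.Finite.of_finite_image (hfin.subset himg) hinj

/-- lattice closure: the pointwise min lands in the lower set, the pointwise max in
the upper set. -/
lemma omegaAvoidS_inf_sup_mem {k : ℕ} {T₀ T₁ : ℤ} {x y x' y' : Fin k → ℤ}
    {g : ℤ → WithBot ℤ} {S : Set ℤ}
    (hxx : ∀ i, x i ≤ x' i) (hyy : ∀ i, y i ≤ y' i)
    {a b : Fin k → ℤ → ℤ}
    (ha : a ∈ OmegaAvoidS k T₀ T₁ x y g S) (hb : b ∈ OmegaAvoidS k T₀ T₁ x' y' g S) :
    a ⊓ b ∈ OmegaAvoidS k T₀ T₁ x y g S ∧ a ⊔ b ∈ OmegaAvoidS k T₀ T₁ x' y' g S := by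
  obtain ⟨ha1, ha2, ha3, ha4, ha5⟩ := ha
  obtain ⟨hb1, hb2, hb3, hb4, hb5⟩ := hb
  constructor
  · refine ⟨?_, ?_, ?_, ?_, ?_⟩
    · intro i r h1 h2
      have Ha := ha1 i r h1 h2
      have Hb := hb1 i r h1 h2
      simp only [Pi.inf_apply]
      omega
    · intro i
      simp only [Pi.inf_apply, ha2 i, hb2 i]
      exact min_eq_left (hxx i)
    · intro i
      simp only [Pi.inf_apply, ha3 i, hb3 i]
      exact min_eq_left (hyy i)
    · intro r hr
      refine ⟨fun i j hij => ?_, fun i => ?_⟩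
      · simpa only [Pi.inf_apply] using
          inf_le_inf ((ha4 r hr).1 i j hij) ((hb4 r hr).1 i j hij)
      · simp only [Pi.inf_apply]
        rw [WithBot.coe_min]
        exact le_min ((ha4 r hr).2 i) ((hb4 r hr).2 i)
    · intro i r hri
      simp only [Pi.inf_apply, ha5 i r hri, hb5 i r hri, min_self]
  · refine ⟨?_, ?_, ?_, ?_, ?_⟩
    · intro i r h1 h2
      have Ha := ha1 i r h1 h2
      have Hb := hb1 i r h1 h2
      simp only [Pi.sup_apply]
      omega
    · intro i
      simp only [Pi.sup_apply, ha2 i, hb2 i]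
      exact max_eq_right (hxx i)
    · intro i
      simp only [Pi.sup_apply, ha3 i, hb3 i]
      exact max_eq_right (hyy i)
    · intro r hr
      refine ⟨fun i j hij => ?_, fun i => ?_⟩
      · simpa only [Pi.sup_apply] using
          sup_le_sup ((ha4 r hr).1 i j hij) ((hb4 r hr).1 i j hij)
      · simp only [Pi.sup_apply]
        exact le_trans ((hb4 r hr).2 i) (WithBot.coe_le_coe.mpr le_sup_right)
    · intro i r hri
      simp only [Pi.sup_apply, ha5 i r hri, hb5 i r hri, max_self]

/-- monotone coupling of avoiding Bernoulli line ensembles in the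
boundary data `x ≤ x'`, `y ≤ y'`. -/
theorem stmt13 (k : ℕ) (T₀ T₁ : ℤ) (hT : T₀ < T₁) (S : Set ℤ)
    (hS : S ⊆ Set.Icc T₀ T₁)
    (g : ℤ → WithBot ℤ)
    (x y x' y' : Fin k → ℤ)
    (hx : Antitone x) (hy : Antitone y) (hx' : Antitone x') (hy' : Antitone y')
    (hxx : ∀ i, x i ≤ x' i) (hyy : ∀ i, y i ≤ y' i)
    (hneb : (OmegaAvoidS k T₀ T₁ x y g S).Nonempty)
    (hnet : (OmegaAvoidS k T₀ T₁ x' y' g S).Nonempty) :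
    ∃ (Ω : Type) (mΩ : MeasurableSpace Ω) (P : Measure Ω),
      IsProbabilityMeasure P ∧
      ∃ Lt Lb : Ω → (Fin k → ℤ → ℤ),
        (∀ᵐ ω ∂P, Lt ω ∈ OmegaAvoidS k T₀ T₁ x' y' g S) ∧
        (∀ q ∈ OmegaAvoidS k T₀ T₁ x' y' g S,
          P {ω | Lt ω = q} = ((OmegaAvoidS k T₀ T₁ x' y' g S).ncard : ℝ≥0∞)⁻¹) ∧
        (∀ᵐ ω ∂P, Lb ω ∈ OmegaAvoidS k T₀ T₁ x y g S) ∧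
        (∀ q ∈ OmegaAvoidS k T₀ T₁ x y g S,
          P {ω | Lb ω = q} = ((OmegaAvoidS k T₀ T₁ x y g S).ncard : ℝ≥0∞)⁻¹) ∧
        (∀ᵐ ω ∂P, ∀ (i : Fin k) (r : ℤ), T₀ ≤ r → r ≤ T₁ → Lb ω i r ≤ Lt ω i r) := by
  classical
  have hAfin : (OmegaAvoidS k T₀ T₁ x y g S).Finite := omegaAvoidS_finite k T₀ T₁ x y g S
  have hBfin : (OmegaAvoidS k T₀ T₁ x' y' g S).Finite := omegaAvoidS_finite k T₀ T₁ x' y' g S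
  set Afin : Finset (Fin k → ℤ → ℤ) := hAfin.toFinset with hAfin'
  set Bfin : Finset (Fin k → ℤ → ℤ) := hBfin.toFinset with hBfin'
  set m := Afin.card with hm
  set n := Bfin.card with hn
  have hm0 : m ≠ 0 := Finset.card_ne_zero_of_mem (hAfin.mem_toFinset.mpr hneb.choose_spec)
  have hn0 : n ≠ 0 := Finset.card_ne_zero_of_mem (hBfin.mem_toFinset.mpr hnet.choose_spec)
  -- the bipartite neighbourhoods for Hall's theorem
  set nbr : (↥Afin × Fin n) → Finset ((Fin k → ℤ → ℤ) × Fin m) :=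
    fun p => (Bfin.filter fun b => (p.1 : Fin k → ℤ → ℤ) ≤ b) ×ˢ Finset.univ with hnbr
  -- Hall's condition, via the Daykin inequality
  have hall : ∀ s : Finset (↥Afin × Fin n), s.card ≤ (s.biUnion nbr).card := by
    intro s
    set T : Finset (Fin k → ℤ → ℤ) := s.image fun p => (p.1 : Fin k → ℤ → ℤ) with hT
    have hTA : T ⊆ Afin := by
      intro a ha
      rw [hT, Finset.mem_image] at ha
      obtain ⟨p, -, rfl⟩ := ha
      exact p.1.2
    set N : Finset (Fin k → ℤ → ℤ) := Bfin.filter (fun b => ∃ a ∈ T, a ≤ b) with hN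
    have h1 : s.card ≤ T.card * n := by
      have hinj : Function.Injective
          (fun p : ↥Afin × Fin n => ((p.1 : Fin k → ℤ → ℤ), p.2)) := by
        intro p q h
        rw [Prod.ext_iff] at h ⊢
        exact ⟨Subtype.ext h.1, h.2⟩
      calc s.card = (s.image fun p => ((p.1 : Fin k → ℤ → ℤ), p.2)).card :=
            (Finset.card_image_of_injective _ hinj).symm
        _ ≤ (T ×ˢ (Finset.univ : Finset (Fin n))).card := by
            apply Finset.card_le_card
            intro q hq
            rw [Finset.mem_image] at hq
            obtain ⟨p, hp, rfl⟩ := hq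
            rw [Finset.mem_product]
            exact ⟨Finset.mem_image.mpr ⟨p, hp, rfl⟩, Finset.mem_univ _⟩
        _ = T.card * n := by simp [Finset.card_product]
    have h2 : s.biUnion nbr = N ×ˢ (Finset.univ : Finset (Fin m)) := by
      ext ⟨b, j⟩
      simp only [Finset.mem_biUnion, hnbr, hN, Finset.mem_product, Finset.mem_filter,
        Finset.mem_univ, and_true, hT, Finset.mem_image]
      constructor
      · rintro ⟨p, hp, hbB, hle⟩
        exact ⟨hbB, (p.1 : Fin k → ℤ → ℤ), ⟨p, hp, rfl⟩, hle⟩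
      · rintro ⟨hbB, a, ⟨p, hp, rfl⟩, hle⟩
        exact ⟨p, hp, hbB, hle⟩
    have hinfs : (T ⊼ Bfin).card ≤ m := by
      apply Finset.card_le_card
      intro c hc
      rw [Finset.mem_infs] at hc
      obtain ⟨a, haT, b, hbB, rfl⟩ := hc
      exact hAfin.mem_toFinset.mpr (omegaAvoidS_inf_sup_mem hxx hyy
        (hAfin.mem_toFinset.mp (hTA haT)) (hBfin.mem_toFinset.mp hbB)).1
    have hsups : (T ⊻ Bfin).card ≤ N.card := by
      apply Finset.card_le_card
      intro c hc
      rw [Finset.mem_sups] at hc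
      obtain ⟨a, haT, b, hbB, rfl⟩ := hc
      rw [hN, Finset.mem_filter]
      refine ⟨hBfin.mem_toFinset.mpr (omegaAvoidS_inf_sup_mem hxx hyy
        (hAfin.mem_toFinset.mp (hTA haT)) (hBfin.mem_toFinset.mp hbB)).2,
        a, haT, le_sup_left⟩
    calc s.card ≤ T.card * n := h1
      _ = T.card * Bfin.card := rfl
      _ ≤ (T ⊼ Bfin).card * (T ⊻ Bfin).card := Finset.le_card_infs_mul_card_sups T Bfin
      _ ≤ m * N.card := Nat.mul_le_mul hinfs hsups
      _ = (N ×ˢ (Finset.univ : Finset (Fin m))).card := by simp [Finset.card_product, mul_comm]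
      _ = (s.biUnion nbr).card := by rw [h2]
  obtain ⟨f, hfinj, hfmem⟩ :=
    (Finset.all_card_le_biUnion_card_iff_exists_injective nbr).mp hall
  have hfB : ∀ p, (f p).1 ∈ Bfin ∧ (p.1 : Fin k → ℤ → ℤ) ≤ (f p).1 := by
    intro p
    have := hfmem p
    rw [hnbr, Finset.mem_product, Finset.mem_filter] at this
    exact this.1
  -- the blown-up map is a bijection onto `Bfin ×ˢ univ`
  have hgmem : ∀ p, f p ∈ Bfin ×ˢ (Finset.univ : Finset (Fin m)) :=
    fun p => Finset.mem_product.mpr ⟨(hfB p).1, Finset.mem_univ _⟩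
  let gm : (↥Afin × Fin n) → ↥(Bfin ×ˢ (Finset.univ : Finset (Fin m))) :=
    fun p => ⟨f p, hgmem p⟩
  have hgminj : Function.Injective gm := fun p q h => hfinj (Subtype.ext_iff.mp h)
  have hcards : Fintype.card (↥Afin × Fin n)
      = Fintype.card ↥(Bfin ×ˢ (Finset.univ : Finset (Fin m))) := by
    simp [Fintype.card_prod, Fintype.card_coe, Finset.card_product, mul_comm]
    rfl
  have hgmbij : Function.Bijective gm :=
    (Fintype.bijective_iff_injective_and_card gm).mpr ⟨hgminj, hcards⟩
  let e := Equiv.ofBijective gm hgmbij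
  -- the coupling space
  letI mΩ : MeasurableSpace (↥Afin × Fin n) := ⊤
  haveI : MeasurableSingletonClass (↥Afin × Fin n) :=
    ⟨fun _ => MeasurableSpace.measurableSet_top⟩
  set P : Measure (↥Afin × Fin n) := ((m : ℝ≥0∞) * n)⁻¹ • Measure.count with hP
  have hPapp : ∀ s : Set (↥Afin × Fin n), P s = ((m : ℝ≥0∞) * n)⁻¹ * s.ncard := by
    intro s
    rw [hP, Measure.smul_apply, smul_eq_mul,
      Measure.count_apply_finite s (Set.toFinite s),
      Set.ncard_eq_toFinset_card s (Set.toFinite s)]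
  have hmtop : (m : ℝ≥0∞) ≠ ⊤ := ENNReal.natCast_ne_top m
  have hntop : (n : ℝ≥0∞) ≠ ⊤ := ENNReal.natCast_ne_top n
  have hm0' : (m : ℝ≥0∞) ≠ 0 := Nat.cast_ne_zero.mpr hm0
  have hn0' : (n : ℝ≥0∞) ≠ 0 := Nat.cast_ne_zero.mpr hn0
  have hprob : IsProbabilityMeasure P := by
    constructor
    rw [hPapp Set.univ, Set.ncard_univ, Nat.card_eq_fintype_card, Fintype.card_prod,
      Fintype.card_coe, Fintype.card_fin, Nat.cast_mul]
    exact ENNReal.inv_mul_cancel (mul_ne_zero hm0' hn0') (ENNReal.mul_ne_top hmtop hntop)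
  refine ⟨↥Afin × Fin n, mΩ, P, hprob, fun ω => (f ω).1, fun ω => (ω.1 : Fin k → ℤ → ℤ),
    ?_, ?_, ?_, ?_, ?_⟩
  · exact ae_of_all _ fun ω => hBfin.mem_toFinset.mp (hfB ω).1
  · -- distribution of the top ensemble
    intro q hq
    have hqB : q ∈ Bfin := hBfin.mem_toFinset.mpr hq
    have hBcard : (OmegaAvoidS k T₀ T₁ x' y' g S).ncard = n :=
      Set.ncard_eq_toFinset_card _ hBfin
    rw [hBcard]
    have hzmem : ∀ j : Fin m, ((q, j) : (Fin k → ℤ → ℤ) × Fin m)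
        ∈ Bfin ×ˢ (Finset.univ : Finset (Fin m)) :=
      fun j => Finset.mem_product.mpr ⟨hqB, Finset.mem_univ _⟩
    let z : Fin m → ↥(Bfin ×ˢ (Finset.univ : Finset (Fin m))) := fun j => ⟨(q, j), hzmem j⟩
    have hfval : ∀ j, f (e.symm (z j)) = (q, j) := by
      intro j
      have h' : gm (e.symm (z j)) = z j := e.apply_symm_apply (z j)
      exact Subtype.ext_iff.mp h'
    let φ : Fin m → {ω : ↥Afin × Fin n // (f ω).1 = q} :=
      fun j => ⟨e.symm (z j), by rw [hfval j]⟩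
    have hφbij : Function.Bijective φ := by
      constructor
      · intro j j' h
        have h' : e.symm (z j) = e.symm (z j') := Subtype.ext_iff.mp h
        have h'' := e.symm.injective h'
        have h''' := Subtype.ext_iff.mp h''
        exact (Prod.ext_iff.mp h''').2
      · rintro ⟨ω, hω⟩
        refine ⟨(f ω).2, ?_⟩
        apply Subtype.ext
        show e.symm (z (f ω).2) = ω
        have hz' : z (f ω).2 = gm ω := by
          apply Subtype.ext
          show ((q, (f ω).2) : (Fin k → ℤ → ℤ) × Fin m) = f ω
          rw [← hω]
        rw [hz']
        exact e.symm_apply_apply ω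
    have hcard : ({ω : ↥Afin × Fin n | (f ω).1 = q}).ncard = m := by
      rw [← Nat.card_coe_set_eq]
      calc Nat.card ↑{ω : ↥Afin × Fin n | (f ω).1 = q}
          = Nat.card (Fin m) := Nat.card_congr (Equiv.ofBijective φ hφbij).symm
        _ = m := by simp
    show P {ω : ↥Afin × Fin n | (f ω).1 = q} = ((n : ℝ≥0∞))⁻¹
    rw [hPapp, hcard]
    rw [ENNReal.mul_inv (Or.inl hm0') (Or.inl hmtop),
      mul_comm ((m : ℝ≥0∞))⁻¹ ((n : ℝ≥0∞))⁻¹, mul_assoc,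
      ENNReal.inv_mul_cancel hm0' hmtop, mul_one]
  · exact ae_of_all _ fun ω => hAfin.mem_toFinset.mp ω.1.2
  · -- distribution of the bottom ensemble
    intro q hq
    have hqA : q ∈ Afin := hAfin.mem_toFinset.mpr hq
    have hAcard : (OmegaAvoidS k T₀ T₁ x y g S).ncard = m :=
      Set.ncard_eq_toFinset_card _ hAfin
    rw [hAcard]
    let ψ : Fin n → {ω : ↥Afin × Fin n // (ω.1 : Fin k → ℤ → ℤ) = q} :=
      fun j => ⟨(⟨q, hqA⟩, j), rfl⟩
    have hψbij : Function.Bijective ψ := by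
      constructor
      · intro j j' h
        exact (Prod.ext_iff.mp (Subtype.ext_iff.mp h)).2
      · rintro ⟨⟨a, j⟩, (hω : (a : Fin k → ℤ → ℤ) = q)⟩
        exact ⟨j, Subtype.ext (Prod.ext_iff.mpr ⟨Subtype.ext hω.symm, rfl⟩)⟩
    have hcard : ({ω : ↥Afin × Fin n | (ω.1 : Fin k → ℤ → ℤ) = q}).ncard = n := by
      rw [← Nat.card_coe_set_eq]
      calc Nat.card ↑{ω : ↥Afin × Fin n | (ω.1 : Fin k → ℤ → ℤ) = q}
          = Nat.card (Fin n) := Nat.card_congr (Equiv.ofBijective ψ hψbij).symm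
        _ = n := by simp
    show P {ω : ↥Afin × Fin n | (ω.1 : Fin k → ℤ → ℤ) = q} = ((m : ℝ≥0∞))⁻¹
    rw [hPapp, hcard]
    rw [ENNReal.mul_inv (Or.inl hm0') (Or.inl hmtop), mul_assoc,
      ENNReal.inv_mul_cancel hn0' hntop, mul_one]
  · exact ae_of_all _ fun ω i r _ _ => (hfB ω).2 i r
end

section
/- Fix k ∈ ℕ, integers T₀ < T₁, a subset S ⊆ [[T₀,T₁]], two functions g^t, g^b : [[T₀,T₁]] → [−∞,∞) with g^t(r) ≥ g^b(r) for all r, and vectors x, y ∈ 𝔚_k. Assume Ω_avoid(T₀,T₁,x,y,∞,g^t;S) and Ω_avoid(T₀,T₁,x,y,∞,g^b;S) are both nonempty. Then there exists a probability space supporting Bernoulli line ensembles 𝔏^t, 𝔏^b such that 𝔏^t is uniform on Ω_avoid(T₀,T₁,x,y,∞,g^t;S), 𝔏^b is uniform on Ω_avoid(T₀,T₁,x,y,∞,g^b;S), and almost surely L^t_i(r) ≥ L^b_i(r) for all i ∈ [[1,k]] and r ∈ [[T₀,T₁]]. -/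
open MeasureTheory
open scoped ENNReal FinsetFamily

section Aux

variable {k : ℕ} {T₀ T₁ : ℤ} {S : Set ℤ} {x y : Fin k → ℤ} {g gt gb : ℤ → WithBot ℤ}

/-- Closure of `OmegaAvoidS` under pointwise sup. -/
lemma omega_sup_mem {L M : Fin k → ℤ → ℤ}
    (hL : L ∈ OmegaAvoidS k T₀ T₁ x y g S) (hM : M ∈ OmegaAvoidS k T₀ T₁ x y g S) :
    L ⊔ M ∈ OmegaAvoidS k T₀ T₁ x y g S := by
  obtain ⟨hL1, hL2, hL3, hL4, hL5⟩ := hL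
  obtain ⟨hM1, hM2, hM3, hM4, hM5⟩ := hM
  refine ⟨?_, ?_, ?_, ?_, ?_⟩
  · intro i r h0 h1
    have h := hL1 i r h0 h1
    have h' := hM1 i r h0 h1
    simp only [Pi.sup_apply] at *
    omega
  · intro i; simp [Pi.sup_apply, hL2 i, hM2 i]
  · intro i; simp [Pi.sup_apply, hL3 i, hM3 i]
  · intro r hr
    refine ⟨fun i j hij => ?_, fun i => ?_⟩
    · exact sup_le_sup ((hL4 r hr).1 i j hij) ((hM4 r hr).1 i j hij)
    · refine le_trans ((hL4 r hr).2 i) ?_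
      exact_mod_cast (le_sup_left : L i r ≤ (L ⊔ M) i r)
  · intro i r hr; simp [Pi.sup_apply, hL5 i r hr, hM5 i r hr]

/-- Closure of `OmegaAvoidS` under pointwise inf. -/
lemma omega_inf_mem {L M : Fin k → ℤ → ℤ}
    (hL : L ∈ OmegaAvoidS k T₀ T₁ x y g S) (hM : M ∈ OmegaAvoidS k T₀ T₁ x y g S) :
    L ⊓ M ∈ OmegaAvoidS k T₀ T₁ x y g S := by
  obtain ⟨hL1, hL2, hL3, hL4, hL5⟩ := hL
  obtain ⟨hM1, hM2, hM3, hM4, hM5⟩ := hM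
  refine ⟨?_, ?_, ?_, ?_, ?_⟩
  · intro i r h0 h1
    have h := hL1 i r h0 h1
    have h' := hM1 i r h0 h1
    simp only [Pi.inf_apply] at *
    omega
  · intro i; simp [Pi.inf_apply, hL2 i, hM2 i]
  · intro i; simp [Pi.inf_apply, hL3 i, hM3 i]
  · intro r hr
    refine ⟨fun i j hij => ?_, fun i => ?_⟩
    · exact inf_le_inf ((hL4 r hr).1 i j hij) ((hM4 r hr).1 i j hij)
    · have h1 := (hL4 r hr).2 i
      have h2 := (hM4 r hr).2 i
      have : ((L ⊓ M) i r : WithBot ℤ) = min (L i r : WithBot ℤ) (M i r : WithBot ℤ) := by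
        simp [Pi.inf_apply]
      rw [this]
      exact le_min h1 h2
  · intro i r hr; simp [Pi.inf_apply, hL5 i r hr, hM5 i r hr]

/-- `OmegaAvoidS` is antitone in the boundary function. -/
lemma omega_mono_g (hg : ∀ r, gb r ≤ gt r) :
    OmegaAvoidS k T₀ T₁ x y gt S ⊆ OmegaAvoidS k T₀ T₁ x y gb S := by
  rintro L ⟨h1, h2, h3, h4, h5⟩
  exact ⟨h1, h2, h3, fun r hr => ⟨(h4 r hr).1, fun i => le_trans (hg r) ((h4 r hr).2 i)⟩, h5⟩

/-- The top set is an up-set within the bottom set. -/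
lemma omega_upset {L M : Fin k → ℤ → ℤ}
    (hM : M ∈ OmegaAvoidS k T₀ T₁ x y gt S)
    (hL : L ∈ OmegaAvoidS k T₀ T₁ x y gb S) (h : M ≤ L) :
    L ∈ OmegaAvoidS k T₀ T₁ x y gt S := by
  obtain ⟨h1, h2, h3, h4, h5⟩ := hL
  refine ⟨h1, h2, h3, fun r hr => ⟨(h4 r hr).1, fun i => ?_⟩, h5⟩
  refine le_trans (hM.2.2.2.1 r hr |>.2 i) ?_
  exact_mod_cast (h i r : M i r ≤ L i r)

/-- Paths in `OmegaAvoidS` are bounded on the time interval. -/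
lemma omega_bound {L : Fin k → ℤ → ℤ} (hL : L ∈ OmegaAvoidS k T₀ T₁ x y g S)
    (i : Fin k) {r : ℤ} (h0 : T₀ ≤ r) (h1 : r ≤ T₁) :
    x i ≤ L i r ∧ L i r ≤ x i + (r - T₀) := by
  obtain ⟨hup, hx, -, -, -⟩ := hL
  have key : ∀ n, T₀ ≤ n → n ≤ T₁ → x i ≤ L i n ∧ L i n ≤ x i + (n - T₀) := by
    refine fun n hn => Int.le_induction (motive := fun n _ => n ≤ T₁ → x i ≤ L i n ∧ L i n ≤ x i + (n - T₀)) ?_ ?_ n hn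
    · intro _; rw [hx i]; omega
    · intro m hm ih hm1
      have h := ih (by omega)
      rcases hup i m hm (by omega) with h' | h' <;> omega
  exact key r h0 h1

/-- `OmegaAvoidS` is a finite set. -/
lemma omega_finite : (OmegaAvoidS k T₀ T₁ x y g S).Finite := by
  classical
  have hIcc : (Set.Icc T₀ T₁).Finite := Set.finite_Icc T₀ T₁
  haveI := hIcc.to_subtype
  set Φ : (Fin k → ℤ → ℤ) → (Fin k → (Set.Icc T₀ T₁) → ℤ) :=
    fun L i r => L i r with hΦ
  have hinj : Set.InjOn Φ (OmegaAvoidS k T₀ T₁ x y g S) := by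
    intro L hL M hM hLM
    funext i r
    by_cases hr : r ∈ Set.Icc T₀ T₁
    · exact congrFun (congrFun hLM i) ⟨r, hr⟩
    · rw [Set.mem_Icc, not_and_or, not_le, not_le] at hr
      rw [hL.2.2.2.2 i r hr, hM.2.2.2.2 i r hr]
  have himg : Φ '' (OmegaAvoidS k T₀ T₁ x y g S) ⊆
      Set.pi Set.univ (fun i : Fin k =>
        Set.pi Set.univ (fun _ : Set.Icc T₀ T₁ => Set.Icc (x i) (x i + (T₁ - T₀)))) := by
    rintro - ⟨L, hL, rfl⟩
    intro i _ r _
    have := omega_bound hL i r.2.1 r.2.2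
    have hr2 := r.2.2
    show x i ≤ L i (r : ℤ) ∧ L i (r : ℤ) ≤ x i + (T₁ - T₀)
    have h2 := r.2.2
    omega
  have hfin : (Set.pi Set.univ (fun i : Fin k =>
      Set.pi Set.univ (fun _ : Set.Icc T₀ T₁ => Set.Icc (x i) (x i + (T₁ - T₀))))).Finite :=
    Set.Finite.pi (fun i => Set.Finite.pi (fun _ => Set.finite_Icc _ _))
  exact Set.Finite.of_finite_image (hfin.subset himg) hinj

end Aux

/-- monotone coupling of avoiding Bernoulli line ensembles in the lower
boundary function `g^b ≤ g^t`. -/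
theorem stmt14 (k : ℕ) (T₀ T₁ : ℤ) (hT : T₀ < T₁) (S : Set ℤ)
    (hS : S ⊆ Set.Icc T₀ T₁)
    (gt gb : ℤ → WithBot ℤ) (hg : ∀ r, gb r ≤ gt r)
    (x y : Fin k → ℤ) (hx : Antitone x) (hy : Antitone y)
    (hneb : (OmegaAvoidS k T₀ T₁ x y gb S).Nonempty)
    (hnet : (OmegaAvoidS k T₀ T₁ x y gt S).Nonempty) :
    ∃ (Ω : Type) (mΩ : MeasurableSpace Ω) (P : Measure Ω),
      IsProbabilityMeasure P ∧
      ∃ Lt Lb : Ω → (Fin k → ℤ → ℤ),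
        (∀ᵐ ω ∂P, Lt ω ∈ OmegaAvoidS k T₀ T₁ x y gt S) ∧
        (∀ q ∈ OmegaAvoidS k T₀ T₁ x y gt S,
          P {ω | Lt ω = q} = ((OmegaAvoidS k T₀ T₁ x y gt S).ncard : ℝ≥0∞)⁻¹) ∧
        (∀ᵐ ω ∂P, Lb ω ∈ OmegaAvoidS k T₀ T₁ x y gb S) ∧
        (∀ q ∈ OmegaAvoidS k T₀ T₁ x y gb S,
          P {ω | Lb ω = q} = ((OmegaAvoidS k T₀ T₁ x y gb S).ncard : ℝ≥0∞)⁻¹) ∧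
        (∀ᵐ ω ∂P, ∀ (i : Fin k) (r : ℤ), T₀ ≤ r → r ≤ T₁ → Lb ω i r ≤ Lt ω i r) := by
  classical
  letI : DecidableEq (Fin k → ℤ → ℤ) := Classical.decEq _
  set A := OmegaAvoidS k T₀ T₁ x y gt S with hAdef
  set B := OmegaAvoidS k T₀ T₁ x y gb S with hBdef
  have hAB : A ⊆ B := omega_mono_g hg
  have hAfin : A.Finite := omega_finite
  have hBfin : B.Finite := omega_finite
  set Af := hAfin.toFinset with hAfdef
  set Bf := hBfin.toFinset with hBfdef
  have hmemA : ∀ {L}, L ∈ Af ↔ L ∈ A := fun {L} => hAfin.mem_toFinset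
  have hmemB : ∀ {L}, L ∈ Bf ↔ L ∈ B := fun {L} => hBfin.mem_toFinset
  set nA := Af.card with hnA
  set nB := Bf.card with hnB
  have hAne : Af.Nonempty := ⟨hnet.choose, hmemA.2 hnet.choose_spec⟩
  have hBne : Bf.Nonempty := ⟨hneb.choose, hmemB.2 hneb.choose_spec⟩
  have hnA0 : nA ≠ 0 := Finset.card_ne_zero_of_mem hAne.choose_spec
  have hnB0 : nB ≠ 0 := Finset.card_ne_zero_of_mem hBne.choose_spec
  -- Hall's condition via the Daykin (four functions) inequality
  set t : (Af × Fin nB) → Finset ((Fin k → ℤ → ℤ) × Fin nA) :=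
    fun p => (Bf.filter (fun b => b ≤ p.1.val)) ×ˢ (Finset.univ : Finset (Fin nA)) with htdef
  have hall : ∀ s : Finset (Af × Fin nB), s.card ≤ (s.biUnion t).card := by
    intro s
    set A' := s.image (fun p => (p.1.val : Fin k → ℤ → ℤ)) with hA'def
    have hA'sub : ∀ a ∈ A', a ∈ Af := by
      intro a ha
      obtain ⟨p, hp, rfl⟩ := Finset.mem_image.1 ha
      exact p.1.2
    have h1 : s.card ≤ A'.card * nB := by
      have := Finset.card_le_card_of_injOn
        (fun p : Af × Fin nB => ((p.1.val : Fin k → ℤ → ℤ), p.2))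
        (s := s) (t := A' ×ˢ (Finset.univ : Finset (Fin nB)))
        (fun p hp => Finset.mem_product.2 ⟨Finset.mem_image_of_mem _ hp, Finset.mem_univ _⟩)
        (by
          intro p hp q hq h
          simp only [Prod.mk.injEq] at h
          exact Prod.ext (Subtype.ext h.1) h.2)
      simpa [Finset.card_product] using this
    set D := Bf.filter (fun b => ∃ a ∈ A', b ≤ a) with hDdef
    have hbU : s.biUnion t = D ×ˢ (Finset.univ : Finset (Fin nA)) := by
      ext c
      constructor
      · intro hc
        obtain ⟨p, hp, hcp⟩ := Finset.mem_biUnion.1 hc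
        have hcp' : c ∈ (Bf.filter (fun b => b ≤ p.1.val)) ×ˢ
            (Finset.univ : Finset (Fin nA)) := hcp
        obtain ⟨h1, h2⟩ := Finset.mem_product.1 hcp'
        obtain ⟨hbB, hble⟩ := Finset.mem_filter.1 h1
        exact Finset.mem_product.2 ⟨Finset.mem_filter.2
          ⟨hbB, ⟨p.1.val, Finset.mem_image_of_mem _ hp, hble⟩⟩, Finset.mem_univ _⟩
      · intro hc
        obtain ⟨h1, -⟩ := Finset.mem_product.1 hc
        obtain ⟨hbB, a, ha, hble⟩ := Finset.mem_filter.1 h1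
        obtain ⟨p, hp, rfl⟩ := Finset.mem_image.1 ha
        refine Finset.mem_biUnion.2 ⟨p, hp, ?_⟩
        exact Finset.mem_product.2 ⟨Finset.mem_filter.2 ⟨hbB, hble⟩, Finset.mem_univ _⟩
    have hdaykin := Finset.le_card_infs_mul_card_sups A' Bf
    have hsubD : A' ⊼ Bf ⊆ D := by
      intro c hc
      obtain ⟨a, ha, b, hb, rfl⟩ := Finset.mem_infs.1 hc
      have haB : a ∈ B := hAB (hmemA.1 (hA'sub a ha))
      have hbB : b ∈ B := hmemB.1 hb
      refine Finset.mem_filter.2 ⟨hmemB.2 (omega_inf_mem haB hbB), a, ha, inf_le_left⟩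
    have hsubA : A' ⊻ Bf ⊆ Af := by
      intro c hc
      obtain ⟨a, ha, b, hb, rfl⟩ := Finset.mem_sups.1 hc
      have haA : a ∈ A := hmemA.1 (hA'sub a ha)
      have hbB : b ∈ B := hmemB.1 hb
      have hsupB : a ⊔ b ∈ B := omega_sup_mem (hAB haA) hbB
      exact hmemA.2 (omega_upset haA hsupB le_sup_left)
    have h2 : A'.card * nB ≤ D.card * nA := by
      calc A'.card * nB ≤ (A' ⊼ Bf).card * (A' ⊻ Bf).card := hdaykin
        _ ≤ D.card * nA :=
          Nat.mul_le_mul (Finset.card_le_card hsubD) (Finset.card_le_card hsubA)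
    calc s.card ≤ A'.card * nB := h1
      _ ≤ D.card * nA := h2
      _ = (s.biUnion t).card := by simp [hbU, Finset.card_product]
  obtain ⟨f, hfinj, hft⟩ := (Finset.all_card_le_biUnion_card_iff_exists_injective t).1 hall
  -- the coupling space
  letI mΩ : MeasurableSpace (Af × Fin nB) := ⊤
  refine ⟨Af × Fin nB, mΩ, ?_⟩
  set P : Measure (Af × Fin nB) :=
    ((nA * nB : ℕ) : ℝ≥0∞)⁻¹ • Measure.count with hPdef
  have hcardΩ : Fintype.card (Af × Fin nB) = nA * nB := by
    simp [Fintype.card_prod, Fintype.card_coe, hnA]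
  have hcount : ∀ (E : Set (Af × Fin nB)), Measure.count E = (E.ncard : ℝ≥0∞) := by
    intro E
    have hE : E.Finite := E.toFinite
    rw [Measure.count_apply_finite' hE MeasurableSpace.measurableSet_top,
      Set.ncard_eq_toFinset_card E hE]
  have hPapply : ∀ (E : Set (Af × Fin nB)),
      P E = ((nA * nB : ℕ) : ℝ≥0∞)⁻¹ * (E.ncard : ℝ≥0∞) := by
    intro E
    rw [hPdef, Measure.smul_apply, smul_eq_mul, hcount]
  have hc0 : ((nA * nB : ℕ) : ℝ≥0∞) ≠ 0 := by
    simpa using Nat.mul_ne_zero hnA0 hnB0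
  refine ⟨P, ?_, ?_⟩
  · constructor
    rw [hPapply, Set.ncard_univ, Nat.card_eq_fintype_card, hcardΩ,
      ENNReal.inv_mul_cancel hc0 (ENNReal.natCast_ne_top _)]
  -- the ensembles
  refine ⟨fun ω => ω.1.val, fun ω => (f ω).1, ?_, ?_, ?_, ?_, ?_⟩
  · exact Filter.Eventually.of_forall fun ω => hmemA.1 ω.1.2
  · -- uniformity of the top ensemble
    intro q hq
    have hqA : q ∈ Af := hmemA.2 hq
    have hfib : ({ω : Af × Fin nB | ω.1.val = q}).ncard = nB := by
      have e : ({ω : Af × Fin nB | ω.1.val = q} : Set _) ≃ Fin nB :=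
        { toFun := fun p => p.1.2
          invFun := fun j => ⟨(⟨q, hqA⟩, j), rfl⟩
          left_inv := by
            rintro ⟨⟨⟨a, haf⟩, j⟩, ha⟩
            have haq : a = q := ha
            subst haq
            rfl
          right_inv := fun j => rfl }
      rw [Set.ncard_eq_toFinset_card' , Set.toFinset_card]
      rw [Fintype.card_congr e, Fintype.card_fin]
    rw [hPapply, hfib]
    have hAncard : A.ncard = nA := Set.ncard_eq_toFinset_card A hAfin
    rw [hAncard]
    push_cast
    rw [ENNReal.mul_inv (Or.inl (by exact_mod_cast hnA0)) (Or.inr (by exact_mod_cast hnB0)),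
      mul_assoc, ENNReal.inv_mul_cancel (by exact_mod_cast hnB0) (by simp), mul_one]
  · exact Filter.Eventually.of_forall fun ω =>
      hmemB.1 (Finset.mem_filter.1 (Finset.mem_product.1 (hft ω)).1).1
  · -- uniformity of the bottom ensemble
    intro q hq
    have hqB : q ∈ Bf := hmemB.2 hq
    -- the image of f is all of Bf ×ˢ univ
    have hFsub : Finset.univ.image f ⊆ Bf ×ˢ (Finset.univ : Finset (Fin nA)) := by
      intro c hc
      obtain ⟨ω, -, rfl⟩ := Finset.mem_image.1 hc
      have := hft ω
      rw [htdef] at this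
      exact Finset.mem_product.2
        ⟨(Finset.mem_filter.1 (Finset.mem_product.1 this).1).1, Finset.mem_univ _⟩
    have hFcard : (Finset.univ.image f).card = nA * nB := by
      rw [Finset.card_image_of_injective _ hfinj, Finset.card_univ, hcardΩ]
    have hFeq : Finset.univ.image f = Bf ×ˢ (Finset.univ : Finset (Fin nA)) := by
      refine Finset.eq_of_subset_of_card_le hFsub ?_
      rw [hFcard, Finset.card_product, Finset.card_univ, Fintype.card_fin, Nat.mul_comm]
    have hfib : ({ω : Af × Fin nB | (f ω).1 = q}).ncard = nA := by
      have h1 : ({ω : Af × Fin nB | (f ω).1 = q} : Set _) =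
          ↑(Finset.univ.filter (fun ω : Af × Fin nB => (f ω).1 = q)) := by
        ext ω; simp
      rw [h1, Set.ncard_coe_finset]
      have h2 : (Finset.univ.filter (fun ω : Af × Fin nB => (f ω).1 = q)).card
          = ((Finset.univ.image f).filter (fun c => c.1 = q)).card := by
        rw [Finset.filter_image, Finset.card_image_of_injective _ hfinj]
      rw [h2, hFeq]
      have h3 : (Bf ×ˢ (Finset.univ : Finset (Fin nA))).filter (fun c => c.1 = q)
          = {q} ×ˢ (Finset.univ : Finset (Fin nA)) := by
        ext ⟨b, j⟩
        simp only [Finset.mem_filter, Finset.mem_product, Finset.mem_univ, and_true,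
          Finset.mem_singleton]
        constructor
        · rintro ⟨-, rfl⟩; rfl
        · rintro rfl; exact ⟨hqB, rfl⟩
      rw [h3, Finset.card_product, Finset.card_singleton, Finset.card_univ,
        Fintype.card_fin, one_mul]
    rw [hPapply, hfib]
    have hBncard : B.ncard = nB := Set.ncard_eq_toFinset_card B hBfin
    rw [hBncard]
    push_cast
    rw [ENNReal.mul_inv (Or.inl (by exact_mod_cast hnA0)) (Or.inr (by exact_mod_cast hnB0)),
      mul_comm ((nA : ℝ≥0∞))⁻¹, mul_assoc,
      ENNReal.inv_mul_cancel (by exact_mod_cast hnA0) (by simp), mul_one]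
  · -- the monotone coupling property
    refine Filter.Eventually.of_forall fun ω i r _ _ => ?_
    have := hft ω
    rw [htdef] at this
    have hle : (f ω).1 ≤ ω.1.val :=
      (Finset.mem_filter.1 (Finset.mem_product.1 this).1).2
    exact hle i r
end

section
/- Fix p, t ∈ (0,1), k ∈ ℕ, and a, b ∈ ℝ^k with strictly decreasing entries (a, b ∈ W_k°). With c₁ = 1/(p(1−p)t), c₂ = 1/(p(1−p)(1−t)), c₃ = 1/(2p(1−p)t(1−t)), define H(z) = det[e^{c₁ a_i z_j}]_{i,j=1}^k · det[e^{c₂ b_i z_j}]_{i,j=1}^k · Π_{i=1}^k e^{−c₃ z_i²}. Then the normalizing constant satisfies ∫_{W_k} H(z) dz = (2π)^{k/2} (p(1−p)t(1−t))^{k/2} · exp( (c₁/2) Σ_i a_i² + (c₂/2) Σ_i b_i² ) · det[ e^{−(b_i − a_j)²/(2p(1−p))} ]_{i,j=1}^k. -/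
open MeasureTheory Real Equiv Function

section Aux

lemma gauss1_integrable (c d : ℝ) (hc : 0 < c) :
    Integrable (fun x : ℝ => Real.exp (-c * x ^ 2 + d * x)) := by
  have h : ∀ x : ℝ, -c * x ^ 2 + d * x = -c * (x - d/(2*c))^2 + d^2/(4*c) := by
    intro x; field_simp; ring
  simp_rw [h, Real.exp_add]
  exact ((integrable_exp_neg_mul_sq hc).comp_sub_right (d/(2*c))).mul_const _

lemma gauss1_integral (c d : ℝ) (hc : 0 < c) :
    ∫ x : ℝ, Real.exp (-c * x ^ 2 + d * x) = Real.sqrt (π / c) * Real.exp (d^2/(4*c)) := by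
  have h : ∀ x : ℝ, -c * x ^ 2 + d * x = -c * (x - d/(2*c))^2 + d^2/(4*c) := by
    intro x; field_simp; ring
  simp_rw [h, Real.exp_add]
  rw [integral_mul_const, integral_sub_right_eq_self (fun x => Real.exp (-c * x ^ 2)) (d/(2*c)),
    integral_gaussian]

variable {k : ℕ}

lemma det_mul_det_eq_sum (f g : Fin k → ℝ → ℝ) (z : Fin k → ℝ) :
    (Matrix.det (Matrix.of fun i j => f i (z j))) *
        (Matrix.det (Matrix.of fun i j => g i (z j)))
      = ∑ σ : Perm (Fin k), ∑ τ : Perm (Fin k),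
          (((Perm.sign σ : ℤ) : ℝ) * ((Perm.sign τ : ℤ) : ℝ)) *
            ∏ j, (f (σ j) (z j) * g (τ j) (z j)) := by
  rw [Matrix.det_apply', Matrix.det_apply', Finset.sum_mul_sum]
  refine Finset.sum_congr rfl fun σ _ => Finset.sum_congr rfl fun τ _ => ?_
  simp only [Matrix.of_apply, Finset.prod_mul_distrib]
  ring

lemma andreief_integrable (f g : Fin k → ℝ → ℝ)
    (hint : ∀ i j, Integrable (fun x => f i x * g j x)) :
    Integrable (fun z : Fin k → ℝ =>
      (Matrix.det (Matrix.of fun i j => f i (z j))) *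
        (Matrix.det (Matrix.of fun i j => g i (z j)))) := by
  have hterm : ∀ (σ τ : Perm (Fin k)),
      Integrable (fun z : Fin k → ℝ => ∏ j, (f (σ j) (z j) * g (τ j) (z j))) :=
    fun σ τ => Integrable.fintype_prod (f := fun j x => f (σ j) x * g (τ j) x)
      (fun j => hint _ _)
  simp_rw [det_mul_det_eq_sum f g]
  exact integrable_finset_sum _ (fun σ _ => integrable_finset_sum _
    (fun τ _ => (hterm σ τ).const_mul _))

lemma andreief (f g : Fin k → ℝ → ℝ)
    (hint : ∀ i j, Integrable (fun x => f i x * g j x)) :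
    ∫ z : Fin k → ℝ,
        (Matrix.det (Matrix.of fun i j => f i (z j))) *
          (Matrix.det (Matrix.of fun i j => g i (z j)))
      = (Nat.factorial k : ℝ) * Matrix.det (Matrix.of fun i j => ∫ x, f i x * g j x) := by
  have hterm : ∀ (σ τ : Perm (Fin k)),
      Integrable (fun z : Fin k → ℝ => ∏ j, (f (σ j) (z j) * g (τ j) (z j))) :=
    fun σ τ => Integrable.fintype_prod (f := fun j x => f (σ j) x * g (τ j) x)
      (fun j => hint _ _)
  simp_rw [det_mul_det_eq_sum f g]
  rw [integral_finset_sum _ (fun σ _ => integrable_finset_sum _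
    (fun τ _ => (hterm σ τ).const_mul _))]
  have : ∀ σ : Perm (Fin k), ∫ z : Fin k → ℝ, ∑ τ : Perm (Fin k),
        (((Perm.sign σ : ℤ) : ℝ) * ((Perm.sign τ : ℤ) : ℝ)) *
          ∏ j, (f (σ j) (z j) * g (τ j) (z j))
      = Matrix.det (Matrix.of fun i j => ∫ x, f i x * g j x) := by
    intro σ
    rw [integral_finset_sum _ (fun τ _ => (hterm σ τ).const_mul _)]
    have hτ : ∀ τ : Perm (Fin k),
        ∫ z : Fin k → ℝ, (((Perm.sign σ : ℤ) : ℝ) * ((Perm.sign τ : ℤ) : ℝ)) *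
            ∏ j, (f (σ j) (z j) * g (τ j) (z j))
          = (((Perm.sign σ : ℤ) : ℝ) * ((Perm.sign τ : ℤ) : ℝ)) *
              ∏ j, ∫ x, f (σ j) x * g (τ j) x := by
      intro τ
      rw [integral_const_mul,
        integral_fintype_prod_volume_eq_prod (fun j x => f (σ j) x * g (τ j) x)]
    simp_rw [hτ]
    rw [Matrix.det_apply']
    refine Fintype.sum_equiv ((Equiv.inv (Perm (Fin k))).trans (Equiv.mulLeft σ))
      _ _ fun τ => ?_
    simp only [Equiv.trans_apply, Equiv.inv_apply, Equiv.coe_mulLeft]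
    have hsign : ((Perm.sign (σ * τ⁻¹) : ℤ) : ℝ)
        = ((Perm.sign σ : ℤ) : ℝ) * ((Perm.sign τ : ℤ) : ℝ) := by
      rw [Perm.sign_mul, Perm.sign_inv]; push_cast; ring
    rw [hsign]
    congr 1
    have := Equiv.prod_comp τ
      (fun j => (Matrix.of fun i j' => ∫ x, f i x * g j' x) ((σ * τ⁻¹) j) j)
    rw [← this]
    refine Finset.prod_congr rfl fun j _ => ?_
    simp [Perm.mul_apply]
  simp_rw [this]
  simp [Finset.sum_const, Finset.card_univ, Fintype.card_perm]

lemma meas_strictAnti (σ : Perm (Fin k)) :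
    MeasurableSet {z : Fin k → ℝ | StrictAnti (z ∘ ⇑σ)} := by
  have : {z : Fin k → ℝ | StrictAnti (z ∘ ⇑σ)}
      = ⋂ i, ⋂ j, {z : Fin k → ℝ | i < j → z (σ j) < z (σ i)} := by
    ext z; simp [StrictAnti, Set.mem_iInter, Function.comp]
  rw [this]
  refine MeasurableSet.iInter fun i => MeasurableSet.iInter fun j => ?_
  by_cases h : i < j
  · simp only [h, forall_true_left]
    exact measurableSet_lt (measurable_pi_apply _) (measurable_pi_apply _)
  · simp [h]

lemma meas_antitone : MeasurableSet {z : Fin k → ℝ | Antitone z} := by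
  have : {z : Fin k → ℝ | Antitone z}
      = ⋂ i, ⋂ j, {z : Fin k → ℝ | i ≤ j → z j ≤ z i} := by
    ext z; simp [Antitone, Set.mem_iInter]
  rw [this]
  refine MeasurableSet.iInter fun i => MeasurableSet.iInter fun j => ?_
  by_cases h : i ≤ j
  · simp only [h, forall_true_left]
    exact measurableSet_le (measurable_pi_apply _) (measurable_pi_apply _)
  · simp [h]

lemma null_noninj : volume {z : Fin k → ℝ | ¬ Function.Injective z} = 0 := by
  have hpair : ∀ i j : Fin k, i ≠ j → volume {z : Fin k → ℝ | z i = z j} = 0 := by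
    intro i j hij
    set L : (Fin k → ℝ) →ₗ[ℝ] ℝ :=
      (LinearMap.proj i : (Fin k → ℝ) →ₗ[ℝ] ℝ) - LinearMap.proj j with hL
    have hset : {z : Fin k → ℝ | z i = z j} = (LinearMap.ker L : Set (Fin k → ℝ)) := by
      ext z
      simp [hL, LinearMap.mem_ker, sub_eq_zero]
    rw [hset]
    refine Measure.addHaar_submodule _ _ (fun htop => ?_)
    have h1 : Pi.single i (1:ℝ) ∈ LinearMap.ker L := htop.symm ▸ Submodule.mem_top
    simp [hL, LinearMap.mem_ker, Pi.single_eq_same, Pi.single_eq_of_ne hij.symm] at h1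
  have hsub : {z : Fin k → ℝ | ¬ Function.Injective z}
      ⊆ ⋃ i, ⋃ j, {z : Fin k → ℝ | i ≠ j ∧ z i = z j} := by
    intro z hz
    simp only [Set.mem_setOf_eq, Function.Injective, not_forall] at hz
    obtain ⟨i, j, hij, hne⟩ := hz
    exact Set.mem_iUnion.2 ⟨i, Set.mem_iUnion.2 ⟨j, hne, hij⟩⟩
  refine measure_mono_null hsub (measure_iUnion_null fun i => measure_iUnion_null fun j => ?_)
  by_cases h : i = j
  · simp [h]
  · exact measure_mono_null (fun z hz => hz.2) (hpair i j h)

lemma exists_perm_strictAnti {z : Fin k → ℝ} (hz : Function.Injective z) :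
    ∃ σ : Perm (Fin k), StrictAnti (z ∘ ⇑σ) := by
  refine ⟨Fin.revPerm.trans (Tuple.sort z), ?_⟩
  have hmono : Monotone (z ∘ ⇑(Tuple.sort z)) := Tuple.monotone_sort z
  have hsm : StrictMono (z ∘ ⇑(Tuple.sort z)) :=
    hmono.strictMono_of_injective (hz.comp (Equiv.injective _))
  intro i j hij
  exact hsm (Fin.rev_lt_rev.2 hij)

lemma disjoint_strictAnti {σ τ : Perm (Fin k)} (hne : σ ≠ τ) :
    Disjoint {z : Fin k → ℝ | StrictAnti (z ∘ ⇑σ)} {z : Fin k → ℝ | StrictAnti (z ∘ ⇑τ)} := by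
  rw [Set.disjoint_left]
  intro z hzσ hzτ
  have hzinj : Function.Injective z := by
    intro i j hij
    have := (hzσ : StrictAnti (z ∘ ⇑σ)).injective
      (a₁ := σ.symm i) (a₂ := σ.symm j) (by simpa using hij)
    simpa using congrArg σ this
  have h1 : Monotone (z ∘ ⇑(Fin.revPerm.trans σ)) := by
    intro i j hij
    exact (hzσ : StrictAnti (z ∘ ⇑σ)).antitone (Fin.rev_le_rev.2 hij)
  have h2 : Monotone (z ∘ ⇑(Fin.revPerm.trans τ)) := by
    intro i j hij
    exact (hzτ : StrictAnti (z ∘ ⇑τ)).antitone (Fin.rev_le_rev.2 hij)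
  have := Tuple.unique_monotone h1 h2
  refine hne (Equiv.ext fun i => hzinj ?_)
  have := congrFun this (Fin.rev i)
  simpa using this

lemma symmetrize (S : (Fin k → ℝ) → ℝ) (hS : Integrable S)
    (hsymm : ∀ (σ : Perm (Fin k)) (z : Fin k → ℝ), S (z ∘ ⇑σ) = S z) :
    ∫ z : Fin k → ℝ, S z
      = (Nat.factorial k : ℝ) * ∫ z in {z : Fin k → ℝ | Antitone z}, S z := by
  set A : Perm (Fin k) → Set (Fin k → ℝ) := fun σ => {z | StrictAnti (z ∘ ⇑σ)} with hA
  have hunion : ∫ z : Fin k → ℝ, S z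
      = ∫ z in ⋃ σ ∈ (Finset.univ : Finset (Perm (Fin k))), A σ, S z := by
    rw [← setIntegral_univ]
    refine setIntegral_congr_set ?_
    rw [MeasureTheory.ae_eq_set]
    constructor
    · refine measure_mono_null (fun z hz => ?_) null_noninj
      simp only [Set.mem_diff, Set.mem_iUnion] at hz
      simp only [Set.mem_setOf_eq]
      intro hinj
      obtain ⟨σ, hσ⟩ := exists_perm_strictAnti hinj
      exact hz.2 ⟨σ, Finset.mem_univ σ, hσ⟩
    · simp
  have hsplit : ∫ z in ⋃ σ ∈ (Finset.univ : Finset (Perm (Fin k))), A σ, S z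
      = ∑ σ : Perm (Fin k), ∫ z in A σ, S z := by
    refine integral_biUnion_finset Finset.univ (fun σ _ => meas_strictAnti σ)
      (fun σ _ τ _ hne => disjoint_strictAnti hne) (fun σ _ => hS.integrableOn)
  have hchg : ∀ σ : Perm (Fin k),
      ∫ z in A σ, S z = ∫ z in {z : Fin k → ℝ | StrictAnti z}, S z := by
    intro σ
    set e : (Fin k → ℝ) ≃ᵐ (Fin k → ℝ) :=
      MeasurableEquiv.piCongrLeft (fun _ : Fin k => ℝ) σ.symm with heq
    have he : ∀ (z : Fin k → ℝ), e z = z ∘ ⇑σ := by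
      intro z
      funext i
      have h := Equiv.piCongrLeft_apply_apply (fun _ : Fin k => ℝ) σ.symm z (σ i)
      simpa [heq, MeasurableEquiv.coe_piCongrLeft] using h
    have hmp : MeasurePreserving (⇑e) volume volume :=
      volume_measurePreserving_piCongrLeft _ σ.symm
    have hkey := hmp.setIntegral_preimage_emb e.measurableEmbedding S
      {z : Fin k → ℝ | StrictAnti z}
    have hpre : ⇑e ⁻¹' {w : Fin k → ℝ | StrictAnti w} = A σ := by
      ext z
      simp only [Set.mem_preimage, Set.mem_setOf_eq, hA, he z]
    rw [hpre] at hkey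
    rw [← hkey]
    refine setIntegral_congr_fun (meas_strictAnti σ) (fun z _ => ?_)
    rw [he z, hsymm]
  simp_rw [hchg] at hsplit
  rw [hunion, hsplit, Finset.sum_const, Finset.card_univ, Fintype.card_perm, Fintype.card_fin,
    nsmul_eq_mul]
  congr 1
  refine setIntegral_congr_set ?_
  rw [MeasureTheory.ae_eq_set]
  constructor
  · have hempty : {z : Fin k → ℝ | StrictAnti z} \ {z : Fin k → ℝ | Antitone z} = ∅ := by
      ext z
      simp only [Set.mem_diff, Set.mem_setOf_eq, Set.mem_empty_iff_false, iff_false, not_and,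
        not_not]
      exact fun h => h.antitone
    simp [hempty]
  · refine measure_mono_null (fun z hz => ?_) null_noninj
    simp only [Set.mem_diff, Set.mem_setOf_eq] at hz
    obtain ⟨hanti, hnsa⟩ := hz
    simp only [StrictAnti, not_forall] at hnsa
    obtain ⟨i, j, hij, hnlt⟩ := hnsa
    have : z i = z j := le_antisymm (not_lt.1 hnlt) (hanti hij.le)
    exact fun hinj => hij.ne (hinj this)

end Aux

/-- the normalizing constant of the limiting density of `k` avoiding
Bernoulli bridges with strictly ordered boundary data `a, b ∈ W_k°`:
`∫_{W_k} det[e^{c₁ aᵢ zⱼ}]·det[e^{c₂ bᵢ zⱼ}]·Π e^{−c₃ zᵢ²} dz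
  = (2π)^{k/2} (p(1−p)t(1−t))^{k/2} e^{(c₁/2)Σaᵢ² + (c₂/2)Σbᵢ²}
    · det[e^{−(bᵢ−aⱼ)²/(2p(1−p))}]`. -/
theorem stmt19 (p t : ℝ) (hp : p ∈ Set.Ioo (0 : ℝ) 1) (ht : t ∈ Set.Ioo (0 : ℝ) 1)
    (k : ℕ) (a b : Fin k → ℝ) (ha : StrictAnti a) (hb : StrictAnti b)
    (c₁ c₂ c₃ : ℝ)
    (hc₁ : c₁ = 1 / (p * (1 - p) * t))
    (hc₂ : c₂ = 1 / (p * (1 - p) * (1 - t)))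
    (hc₃ : c₃ = 1 / (2 * p * (1 - p) * t * (1 - t))) :
    ∫ z in {z : Fin k → ℝ | Antitone z},
        (Matrix.det (Matrix.of fun i j : Fin k => Real.exp (c₁ * a i * z j))
          * Matrix.det (Matrix.of fun i j : Fin k => Real.exp (c₂ * b i * z j))
          * ∏ i, Real.exp (-c₃ * (z i) ^ 2))
      = (2 * Real.pi) ^ ((k : ℝ) / 2) * (p * (1 - p) * t * (1 - t)) ^ ((k : ℝ) / 2)
        * Real.exp ((c₁ / 2) * ∑ i, (a i) ^ 2 + (c₂ / 2) * ∑ i, (b i) ^ 2)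
        * Matrix.det (Matrix.of fun i j : Fin k =>
            Real.exp (-(b i - a j) ^ 2 / (2 * p * (1 - p)))) := by
  obtain ⟨hp0, hp1⟩ := hp
  obtain ⟨ht0, ht1⟩ := ht
  have hq : (0:ℝ) < 1 - p := by linarith
  have hs : (0:ℝ) < 1 - t := by linarith
  have hpq : (0:ℝ) < p * (1 - p) := by positivity
  have hc3 : (0:ℝ) < c₃ := by rw [hc₃]; positivity
  set f : Fin k → ℝ → ℝ := fun i x => Real.exp (c₁ * a i * x) with hf
  set g : Fin k → ℝ → ℝ := fun i x => Real.exp (c₂ * b i * x + -c₃ * x ^ 2) with hg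
  have hfg : ∀ i j : Fin k, (fun x : ℝ => f i x * g j x)
      = fun x : ℝ => Real.exp (-c₃ * x ^ 2 + (c₁ * a i + c₂ * b j) * x) := by
    intro i j; funext x
    rw [hf, hg]; dsimp only; rw [← Real.exp_add]; ring_nf
  have hint : ∀ i j : Fin k, Integrable (fun x : ℝ => f i x * g j x) := by
    intro i j; rw [hfg]; exact gauss1_integrable _ _ hc3
  set F : (Fin k → ℝ) → ℝ := fun z =>
    (Matrix.det (Matrix.of fun i j => f i (z j))) *
      (Matrix.det (Matrix.of fun i j => g i (z j))) with hF
  have hintegrand : ∀ z : Fin k → ℝ,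
      (Matrix.det (Matrix.of fun i j : Fin k => Real.exp (c₁ * a i * z j))
        * Matrix.det (Matrix.of fun i j : Fin k => Real.exp (c₂ * b i * z j))
        * ∏ i, Real.exp (-c₃ * (z i) ^ 2)) = F z := by
    intro z
    rw [hF]
    have h2 : Matrix.det (Matrix.of fun i j : Fin k => Real.exp (c₂ * b i * z j))
        * ∏ i, Real.exp (-c₃ * (z i) ^ 2)
        = Matrix.det (Matrix.of fun i j => g i (z j)) := by
      rw [mul_comm, ← Matrix.det_mul_row (fun j => Real.exp (-c₃ * (z j) ^ 2))]
      congr 1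
      ext i j
      simp only [Matrix.of_apply]
      rw [hg]; dsimp only; rw [← Real.exp_add]; ring_nf
    rw [mul_assoc, h2]
  have hsymmF : ∀ (σ : Perm (Fin k)) (z : Fin k → ℝ), F (z ∘ ⇑σ) = F z := by
    intro σ z
    rw [hF]; dsimp only
    have h1 : (Matrix.of fun i j => f i ((z ∘ ⇑σ) j))
        = (Matrix.of fun i j => f i (z j)).submatrix id ⇑σ := rfl
    have h2 : (Matrix.of fun i j => g i ((z ∘ ⇑σ) j))
        = (Matrix.of fun i j => g i (z j)).submatrix id ⇑σ := rfl
    rw [h1, h2, Matrix.det_permute', Matrix.det_permute']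
    have hsq : ((Perm.sign σ : ℤ) : ℝ) * ((Perm.sign σ : ℤ) : ℝ) = 1 := by
      rcases Int.units_eq_one_or (Perm.sign σ) with h | h <;> rw [h] <;> norm_num
    calc (((Perm.sign σ : ℤ) : ℝ) * Matrix.det (Matrix.of fun i j => f i (z j)))
          * (((Perm.sign σ : ℤ) : ℝ) * Matrix.det (Matrix.of fun i j => g i (z j)))
        = (((Perm.sign σ : ℤ) : ℝ) * ((Perm.sign σ : ℤ) : ℝ))
            * ((Matrix.of fun i j => f i (z j)).det * (Matrix.of fun i j => g i (z j)).det) := by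
          ring
      _ = _ := by rw [hsq, one_mul]
  have hFint : Integrable F := andreief_integrable f g hint
  have step : ∫ z in {z : Fin k → ℝ | Antitone z}, F z
      = Matrix.det (Matrix.of fun i j => ∫ x, f i x * g j x) := by
    have h1 := symmetrize F hFint hsymmF
    have h2 := andreief f g hint
    have h3 : (Nat.factorial k : ℝ) * ∫ z in {z : Fin k → ℝ | Antitone z}, F z
        = (Nat.factorial k : ℝ) * Matrix.det (Matrix.of fun i j => ∫ x, f i x * g j x) := by
      rw [← h1]; exact h2
    exact mul_left_cancel₀ (by exact_mod_cast Nat.factorial_ne_zero k) h3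
  rw [setIntegral_congr_fun meas_antitone (fun z _ => hintegrand z), step]
  -- final algebra
  have hp' : p ≠ 0 := ne_of_gt hp0
  have hq' : (1:ℝ) - p ≠ 0 := ne_of_gt hq
  have ht' : t ≠ 0 := ne_of_gt ht0
  have hs' : (1:ℝ) - t ≠ 0 := ne_of_gt hs
  set r : Fin k → ℝ := fun i => Real.sqrt (π / c₃) * Real.exp (c₁^2 * a i^2/(4*c₃)) with hr
  set s : Fin k → ℝ := fun j => Real.exp (c₂^2 * b j^2/(4*c₃)) with hsdef
  set N : Matrix (Fin k) (Fin k) ℝ :=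
    Matrix.of (fun i j => Real.exp (a i * b j / (p * (1 - p)))) with hN
  have hm : ∀ i j : Fin k, (∫ x, f i x * g j x) = r i * (s j * N i j) := by
    intro i j
    rw [hfg, gauss1_integral _ _ hc3]
    have hd : (c₁ * a i + c₂ * b j)^2/(4*c₃)
        = c₁^2 * a i^2/(4*c₃) + (c₂^2 * b j^2/(4*c₃) + a i * b j / (p * (1 - p))) := by
      rw [hc₁, hc₂, hc₃]
      field_simp
      ring
    rw [hd, Real.exp_add, Real.exp_add, hr, hsdef, hN]
    dsimp only [Matrix.of_apply]
    ring
  have hdetm : Matrix.det (Matrix.of fun i j => ∫ x, f i x * g j x)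
      = (∏ i, r i) * ((∏ j, s j) * N.det) := by
    have : (Matrix.of fun i j => ∫ x, f i x * g j x)
        = Matrix.of fun i j => r i * ((Matrix.of fun i j => s j * N i j) i j) := by
      ext i j; simp only [Matrix.of_apply]; exact hm i j
    rw [this, Matrix.det_mul_column, Matrix.det_mul_row]
  have hdetR : Matrix.det (Matrix.of fun i j : Fin k =>
        Real.exp (-(b i - a j) ^ 2 / (2 * p * (1 - p))))
      = (∏ i, Real.exp (-(b i)^2 / (2 * (p * (1 - p)))))
          * ((∏ j, Real.exp (-(a j)^2 / (2 * (p * (1 - p))))) * N.det) := by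
    have hentry : ∀ i j : Fin k, Real.exp (-(b i - a j) ^ 2 / (2 * p * (1 - p)))
        = Real.exp (-(b i)^2 / (2 * (p * (1 - p))))
            * (Real.exp (-(a j)^2 / (2 * (p * (1 - p)))) * Matrix.transpose N i j) := by
      intro i j
      simp only [Matrix.transpose_apply, hN, Matrix.of_apply]
      rw [← Real.exp_add, ← Real.exp_add]
      congr 1
      field_simp
      ring
    have hmat : (Matrix.of fun i j : Fin k => Real.exp (-(b i - a j) ^ 2 / (2 * p * (1 - p))))
        = Matrix.of fun i j => (Real.exp (-(b i)^2 / (2 * (p * (1 - p)))))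
            * ((Matrix.of fun i j => Real.exp (-(a j)^2 / (2 * (p * (1 - p))))
                * Matrix.transpose N i j) i j) := by
      ext i j; simp only [Matrix.of_apply]; exact hentry i j
    rw [hmat, Matrix.det_mul_column, Matrix.det_mul_row, Matrix.det_transpose]
  rw [hdetm, hdetR]
  -- now a scalar identity times N.det
  have hscal : (∏ i, r i) * (∏ j, s j)
      = ((2 * π) ^ ((k : ℝ) / 2) * (p * (1 - p) * t * (1 - t)) ^ ((k : ℝ) / 2)
          * Real.exp ((c₁ / 2) * ∑ i, (a i) ^ 2 + (c₂ / 2) * ∑ i, (b i) ^ 2))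
        * ((∏ i, Real.exp (-(b i)^2 / (2 * (p * (1 - p)))))
            * (∏ j, Real.exp (-(a j)^2 / (2 * (p * (1 - p)))))) := by
    have hPr : ∏ i, r i = Real.sqrt (π / c₃) ^ k
        * Real.exp ((c₁^2/(4*c₃)) * ∑ i, (a i)^2) := by
      rw [hr, Finset.prod_mul_distrib, Finset.prod_const, Finset.card_univ, Fintype.card_fin,
        ← Real.exp_sum, Finset.mul_sum]
      congr 2
      refine Finset.sum_congr rfl fun i _ => by ring
    have hPs : ∏ j, s j = Real.exp ((c₂^2/(4*c₃)) * ∑ i, (b i)^2) := by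
      rw [hsdef, ← Real.exp_sum, Finset.mul_sum]
      congr 1
      refine Finset.sum_congr rfl fun i _ => by ring
    have hPu : ∏ i, Real.exp (-(b i)^2 / (2 * (p * (1 - p))))
        = Real.exp ((-(1/(2 * (p * (1 - p))))) * ∑ i, (b i)^2) := by
      rw [← Real.exp_sum, Finset.mul_sum]
      congr 1
      refine Finset.sum_congr rfl fun i _ => by ring
    have hPv : ∏ j, Real.exp (-(a j)^2 / (2 * (p * (1 - p))))
        = Real.exp ((-(1/(2 * (p * (1 - p))))) * ∑ i, (a i)^2) := by
      rw [← Real.exp_sum, Finset.mul_sum]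
      congr 1
      refine Finset.sum_congr rfl fun i _ => by ring
    have hsqrt : Real.sqrt (π / c₃) ^ k
        = (2 * π) ^ ((k : ℝ) / 2) * (p * (1 - p) * t * (1 - t)) ^ ((k : ℝ) / 2) := by
      have h1 : π / c₃ = (2 * π) * (p * (1 - p) * t * (1 - t)) := by
        rw [hc₃]; field_simp
      rw [h1, Real.sqrt_eq_rpow, ← Real.rpow_natCast (((2 * π) * (p * (1 - p) * t * (1 - t))) ^ ((1:ℝ)/2)) k,
        ← Real.rpow_mul (by positivity)]
      rw [Real.mul_rpow (by positivity) (by positivity)]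
      congr 1 <;> · congr 1; ring
    have hk1 : c₁^2/(4*c₃) = c₁/2 - 1/(2 * (p * (1 - p))) := by
      rw [hc₁, hc₃]; field_simp; ring
    have hk2 : c₂^2/(4*c₃) = c₂/2 - 1/(2 * (p * (1 - p))) := by
      rw [hc₂, hc₃]; field_simp; ring
    have hexp : Real.exp ((c₁ / 2 - 1/(2*(p*(1-p)))) * ∑ i, (a i)^2)
          * Real.exp ((c₂/2 - 1/(2*(p*(1-p)))) * ∑ i, (b i)^2)
        = Real.exp ((c₁/2) * ∑ i, (a i)^2 + (c₂/2) * ∑ i, (b i)^2)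
            * (Real.exp (-(1/(2*(p*(1-p)))) * ∑ i, (b i)^2)
              * Real.exp (-(1/(2*(p*(1-p)))) * ∑ i, (a i)^2)) := by
      rw [← Real.exp_add, ← Real.exp_add, ← Real.exp_add]
      congr 1
      ring
    rw [hPr, hPs, hPu, hPv, hsqrt, hk1, hk2, mul_assoc, hexp]
    ring
  calc (∏ i, r i) * ((∏ j, s j) * N.det)
      = ((∏ i, r i) * (∏ j, s j)) * N.det := by ring
    _ = _ := by rw [hscal]; ring
end
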